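/- arXiv:2601.17624 — 2 statements merged into one kernel-verified Lean document; each statement's English description precedes it below -/
import Mathlib

section
/- Let (M,c) be a simple coloured binary matroid with M = M_1 ⊕_3 M_2 (a 3-sum along a common 3-element set), such that for each i = 1,2 we have ε(M | E(M_i)) > r(M_i) + 1 and M_i \ E(M_{3−i}) contains a rainbow circuit. Then M contains two disjoint rainbow circuits C_1, C_2 with |C_1| + |C_2| ≤ r(M) + 2. -/
open Matroid
open scoped symmDiff Classical

namespace RainbowPaper

variable {α : Type*} {κ : Type*}

/-- A circuit of a matroid: a minimal dependent set. -/
def Circuit (M : Matroid α) (C : Set α) : Prop :=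
  M.Dep C ∧ ∀ D, D ⊂ C → ¬ M.Dep D

/-- The rank of a set in a matroid: the supremum of the cardinalities of its
independent subsets. -/
noncomputable def rkSet (M : Matroid α) (X : Set α) : ℕ :=
  sSup {n | ∃ I, M.Indep I ∧ I ⊆ X ∧ I.ncard = n}

/-- The rank of a matroid. -/
noncomputable def rk (M : Matroid α) : ℕ := rkSet M M.E

/-- A matroid is simple if every subset of the ground set with at most two
elements is independent (no loops, no parallel pairs). -/
def Simple (M : Matroid α) : Prop := ∀ X ⊆ M.E, X.ncard ≤ 2 → M.Indep X

/-- A matroid is binary if it is representable over `GF(2)`. -/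
def IsBinary (M : Matroid α) : Prop :=
  ∃ (n : ℕ) (φ : α → (Fin n → ZMod 2)),
    ∀ I ⊆ M.E, (M.Indep I ↔ LinearIndependent (ZMod 2) (fun e : I => φ e.1))

/-- A matroid is regular if it is representable over every field. -/
def IsRegular (M : Matroid α) : Prop :=
  ∀ (F : Type) [Field F], ∃ (n : ℕ) (φ : α → (Fin n → F)),
    ∀ I ⊆ M.E, (M.Indep I ↔ LinearIndependent F (fun e : I => φ e.1))

/-- The signed incidence vector of an edge with given endpoints. -/
noncomputable def incVec {V : Type} (p : V × V) : V → ℚ :=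
  fun v => (if v = p.1 then (1 : ℚ) else 0) - (if v = p.2 then (1 : ℚ) else 0)

/-- A matroid is graphic if it is the cycle matroid of a graph, equivalently it is
represented by the signed incidence vectors of the edges of some graph. -/
def IsGraphic (M : Matroid α) : Prop :=
  ∃ (V : Type) (ends : α → V × V),
    ∀ I ⊆ M.E, (M.Indep I ↔ LinearIndependent ℚ (fun e : I => incVec (ends e.1)))

/-- A matroid is cographic if its dual is graphic. -/
def IsCographic (M : Matroid α) : Prop := IsGraphic M✶

/-- The colour class of the colour `s` in the coloured matroid `(M, c)`. -/
def colourClass (M : Matroid α) (c : α → κ) (s : κ) : Set α := {e ∈ M.E | c e = s}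

/-- A rainbow circuit: a circuit on which the colouring is injective. -/
def RainbowCircuit (M : Matroid α) (c : α → κ) (C : Set α) : Prop :=
  Circuit M C ∧ Set.InjOn c C

/-- A coloured matroid is circuit-achromatic if it has no rainbow circuit. -/
def CircuitAchromatic (M : Matroid α) (c : α → κ) : Prop :=
  ∀ C, Circuit M C → ¬ Set.InjOn c C

/-- The union of the first `j` colour classes in an enumeration `f` of the colours. -/
def initialUnion (M : Matroid α) (c : α → κ) {k : ℕ} (f : Fin k → κ) (j : Fin k) : Set α :=
  ⋃ i ∈ Set.Iic j, colourClass M c (f i)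

/-- A colouring of a matroid is stratified if its (nonempty) colour classes can be
enumerated `X_{i_1}, …, X_{i_k}` so that each initial union
`S_j = X_{i_1} ∪ ⋯ ∪ X_{i_j}` is closed and `1 ≤ r(S_1) < r(S_2) < ⋯ < r(S_k) = r(M)`. -/
def Stratified (M : Matroid α) (c : α → κ) : Prop :=
  ∃ (k : ℕ) (f : Fin k → κ),
    Function.Injective f ∧
    (∀ e ∈ M.E, ∃ j, c e = f j) ∧
    (∀ j, (colourClass M c (f j)).Nonempty) ∧
    (∀ j, M.closure (initialUnion M c f j) = initialUnion M c f j) ∧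
    StrictMono (fun j => rkSet M (initialUnion M c f j)) ∧
    (∀ j, 1 ≤ rkSet M (initialUnion M c f j)) ∧
    (∀ j : Fin k, j.val = k - 1 → rkSet M (initialUnion M c f j) = rk M)

/-- A short rainbow circuit pair: two disjoint rainbow circuits whose sizes sum
to at most `r(M) + 2`. -/
def SRCP (M : Matroid α) (c : α → κ) (C₁ C₂ : Set α) : Prop :=
  RainbowCircuit M c C₁ ∧ RainbowCircuit M c C₂ ∧ Disjoint C₁ C₂ ∧
    C₁.ncard + C₂.ncard ≤ rk M + 2

/-- A short rainbow circuit 4-tuple: four rainbow circuits of total size at most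
`2 r(M) + 4` such that no element belongs to more than two of them. -/
def SRC4 (M : Matroid α) (c : α → κ) (C : Fin 4 → Set α) : Prop :=
  (∀ i, RainbowCircuit M c (C i)) ∧
  (∑ i, (C i).ncard) ≤ 2 * rk M + 4 ∧
  (∀ e : α, (Finset.univ.filter (fun i => e ∈ C i)).card ≤ 2)

/-- A cycle of a matroid: a (pairwise) disjoint union of circuits. -/
def IsCycleSet (M : Matroid α) (X : Set α) : Prop :=
  ∃ 𝒞 : Set (Set α), (∀ C ∈ 𝒞, Circuit M C) ∧ 𝒞.PairwiseDisjoint id ∧ X = ⋃₀ 𝒞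

/-- The 3-sum of two binary matroids along a common 3-circuit `T`, described via
the cycle spaces: the ground set of `M` is the symmetric difference of the ground
sets, and the cycles of `M` are exactly the symmetric differences of a cycle of
`M₁` and a cycle of `M₂` lying in `E(M)`. -/
def ThreeSum (M M₁ M₂ : Matroid α) (T : Set α) : Prop :=
  M₁.E ∩ M₂.E = T ∧ T.ncard = 3 ∧ Circuit M₁ T ∧ Circuit M₂ T ∧
  M.E = (M₁.E ∪ M₂.E) \ T ∧
  ∀ X ⊆ M.E, (IsCycleSet M X ↔
    ∃ X₁ X₂, IsCycleSet M₁ X₁ ∧ IsCycleSet M₂ X₂ ∧ X = X₁ ∆ X₂)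


section Aux

lemma finite_strong_induction_aux (P : Set α → Prop)
    (ih : ∀ S : Set α, S.Finite → (∀ D : Set α, D.Finite → D.ncard < S.ncard → P D) → P S) :
    ∀ n (S : Set α), S.Finite → S.ncard ≤ n → P S := by
  intro n
  induction n with
  | zero => intro S hS h0; exact ih S hS (fun D _ hD => by omega)
  | succ n hn =>
    intro S hS hle
    exact ih S hS (fun D hD hlt => hn D hD (by omega))

lemma finite_strong_induction (P : Set α → Prop) {S : Set α} (hS : S.Finite)
    (ih : ∀ S : Set α, S.Finite → (∀ D : Set α, D.Finite → D.ncard < S.ncard → P D) → P S) :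
    P S := finite_strong_induction_aux P ih S.ncard S hS le_rfl

section Basic

variable {M : Matroid α} {C D S : Set α}

lemma circuit_subset_ground (h : Circuit M C) : C ⊆ M.E := h.1.subset_ground

lemma circuit_nonempty (h : Circuit M C) : C.Nonempty := by
  rw [Set.nonempty_iff_ne_empty]
  rintro rfl
  exact h.1.not_indep M.empty_indep

lemma indep_of_not_dep (hS : S ⊆ M.E) (h : ¬ M.Dep S) : M.Indep S := by
  by_contra hni; exact h ⟨hni, hS⟩

lemma circuit_diff_indep (h : Circuit M C) {e : α} (he : e ∈ C) : M.Indep (C \ {e}) :=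
  indep_of_not_dep ((Set.diff_subset).trans h.1.subset_ground)
    (h.2 _ (Set.sdiff_singleton_ssubset.2 he))

lemma exists_circuit_of_dep (hS : S.Finite) (h : M.Dep S) : ∃ C ⊆ S, Circuit M C := by
  revert h
  refine finite_strong_induction (fun S => M.Dep S → ∃ C ⊆ S, Circuit M C) hS ?_
  intro S hS ih h
  by_cases hc : ∀ D, D ⊂ S → ¬ M.Dep D
  · exact ⟨S, subset_rfl, h, hc⟩
  · push_neg at hc
    obtain ⟨D, hD, hDd⟩ := hc
    obtain ⟨C, hCD, hC⟩ := ih D (hS.subset hD.subset) (Set.ncard_lt_ncard hD hS) hDd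
    exact ⟨C, hCD.trans hD.subset, hC⟩

lemma cycle_subset_ground (h : IsCycleSet M S) : S ⊆ M.E := by
  obtain ⟨𝒞, h1, h2, rfl⟩ := h
  exact Set.sUnion_subset fun C hC => circuit_subset_ground (h1 C hC)

lemma cycle_exists_circuit (h : IsCycleSet M S) (hne : S.Nonempty) :
    ∃ C ⊆ S, Circuit M C := by
  obtain ⟨𝒞, h1, h2, rfl⟩ := h
  obtain ⟨x, C, hC, hx⟩ := hne
  exact ⟨C, Set.subset_sUnion_of_mem hC, h1 C hC⟩

lemma circuit_isCycleSet (h : Circuit M C) : IsCycleSet M C :=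
  ⟨{C}, by simpa using h, Set.pairwiseDisjoint_singleton _ _, by simp⟩

lemma empty_isCycleSet (M : Matroid α) : IsCycleSet M ∅ :=
  ⟨∅, by simp, by simp, by simp⟩

end Basic

section Wt

variable {n : ℕ}

lemma zmod2_cases : ∀ a : ZMod 2, a = 0 ∨ a = 1 := by decide

lemma zmod2_add_self : ∀ a : ZMod 2, a + a = 0 := by decide

lemma zmod2_eq_one_of_ne_zero : ∀ a : ZMod 2, a ≠ 0 → a = 1 := by decide

lemma vadd_self (v : Fin n → ZMod 2) : v + v = 0 := by
  funext i; exact zmod2_add_self _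

noncomputable def wt (φ : α → Fin n → ZMod 2) (S : Set α) : Fin n → ZMod 2 :=
  ∑ᶠ e ∈ S, φ e

variable {φ : α → Fin n → ZMod 2} {S T : Set α}

lemma wt_empty : wt φ (∅ : Set α) = 0 := finsum_mem_empty

lemma wt_singleton (a : α) : wt φ {a} = φ a := finsum_mem_singleton

lemma wt_coe_finset (s : Finset α) : wt φ (↑s) = ∑ e ∈ s, φ e := finsum_mem_coe_finset _ _

lemma wt_union (hd : Disjoint S T) (hS : S.Finite) (hT : T.Finite) :
    wt φ (S ∪ T) = wt φ S + wt φ T := finsum_mem_union hd hS hT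

lemma wt_insert {a : α} (ha : a ∉ S) (hS : S.Finite) :
    wt φ (insert a S) = φ a + wt φ S := by
  rw [Set.insert_eq, wt_union (by simpa using ha) (Set.finite_singleton a) hS, wt_singleton]

lemma wt_diff (hTS : T ⊆ S) (hS : S.Finite) : wt φ S = wt φ T + wt φ (S \ T) := by
  rw [← wt_union (Set.disjoint_left.mpr fun a ha hb => hb.2 ha) (hS.subset hTS)
      (hS.subset Set.diff_subset), Set.union_diff_cancel hTS]

lemma wt_symmDiff (hS : S.Finite) (hT : T.Finite) :
    wt φ (S ∆ T) = wt φ S + wt φ T := by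
  have h1 : wt φ (S ∆ T) = wt φ (S \ T) + wt φ (T \ S) :=
    wt_union (Set.disjoint_left.mpr fun a (ha : a ∈ S \ T) (hb : a ∈ T \ S) => ha.2 hb.1)
      (hS.subset Set.diff_subset) (hT.subset Set.diff_subset)
  have h2 := wt_diff (φ := φ) (Set.inter_subset_left (s := S) (t := T)) hS
  rw [Set.diff_self_inter] at h2
  have h3 := wt_diff (φ := φ) (Set.inter_subset_left (s := T) (t := S)) hT
  rw [Set.diff_self_inter, Set.inter_comm T S] at h3
  rw [h1, h2, h3, add_add_add_comm, vadd_self, zero_add]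

lemma wt_eq_sum_subtype (S : Set α) [Fintype S] : wt φ S = ∑ i : S, φ i := by
  have h : wt φ S = wt φ ↑S.toFinset := by rw [Set.coe_toFinset]
  rw [h, wt_coe_finset]
  exact Finset.sum_subtype _ (by simp) _

lemma wt_mem_span (hsub : T ⊆ S) (hT : T.Finite) :
    wt φ T ∈ Submodule.span (ZMod 2) (φ '' S) := by
  induction T, hT using Set.Finite.induction_on with
  | empty => rw [wt_empty]; exact Submodule.zero_mem _
  | insert ha hs ih =>
    rename_i a s
    rw [wt_insert ha hs]
    exact Submodule.add_mem _
      (Submodule.subset_span ⟨a, hsub (Set.mem_insert a s), rfl⟩)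
      (ih ((Set.subset_insert a s).trans hsub))

lemma exists_subset_of_mem_span {v : Fin n → ZMod 2}
    (hv : v ∈ Submodule.span (ZMod 2) (φ '' S)) :
    ∃ T ⊆ S, T.Finite ∧ wt φ T = v := by
  induction hv using Submodule.span_induction with
  | mem x hx =>
    obtain ⟨e, he, rfl⟩ := hx
    exact ⟨{e}, by simpa using he, Set.finite_singleton e, wt_singleton e⟩
  | zero => exact ⟨∅, Set.empty_subset _, Set.finite_empty, wt_empty⟩
  | add x y hx hy ihx ihy =>
    obtain ⟨T₁, h1, hf1, rfl⟩ := ihx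
    obtain ⟨T₂, h2, hf2, rfl⟩ := ihy
    exact ⟨T₁ ∆ T₂, (Set.symmDiff_subset_union).trans (Set.union_subset h1 h2),
      (hf1.union hf2).subset Set.symmDiff_subset_union, wt_symmDiff hf1 hf2⟩
  | smul a x hx ihx =>
    obtain ⟨T₁, h1, hf1, rfl⟩ := ihx
    rcases zmod2_cases a with rfl | rfl
    · exact ⟨∅, Set.empty_subset _, Set.finite_empty, by rw [wt_empty, zero_smul]⟩
    · exact ⟨T₁, h1, hf1, by rw [one_smul]⟩

end Wt

section Rep

variable {n : ℕ} {M : Matroid α} {φ : α → Fin n → ZMod 2} {S C : Set α}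

lemma diff_ssubset_helper {S C : Set α} (hCS : C ⊆ S) (hC : C.Nonempty) : S \ C ⊂ S := by
  obtain ⟨x, hx⟩ := hC
  exact ⟨Set.diff_subset, fun h => (h (hCS hx)).2 hx⟩


lemma dep_of_wt_zero
    (hrep : ∀ I ⊆ M.E, (M.Indep I ↔ LinearIndependent (ZMod 2) (fun e : I => φ e.1)))
    (hsub : S ⊆ M.E) (hS : S.Finite) (hne : S.Nonempty) (h0 : wt φ S = 0) : M.Dep S := by
  refine ⟨fun hI => ?_, hsub⟩
  haveI := hS.fintype
  have hli := (hrep S hsub).1 hI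
  rw [Fintype.linearIndependent_iff] at hli
  obtain ⟨x, hx⟩ := hne
  have := hli (fun _ => 1) (by
    simp only [one_smul]
    rw [← wt_eq_sum_subtype S, h0]) ⟨x, hx⟩
  simp at this

lemma circuit_wt
    (hrep : ∀ I ⊆ M.E, (M.Indep I ↔ LinearIndependent (ZMod 2) (fun e : I => φ e.1)))
    (hfin : M.E.Finite) (hC : Circuit M C) : wt φ C = 0 := by
  have hCfin : C.Finite := hfin.subset hC.1.subset_ground
  haveI := hCfin.fintype
  have hnli : ¬ LinearIndependent (ZMod 2) (fun e : C => φ e.1) :=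
    fun hl => hC.1.not_indep ((hrep C hC.1.subset_ground).2 hl)
  rw [Fintype.not_linearIndependent_iff] at hnli
  obtain ⟨g, hg0, i₀, hi₀⟩ := hnli
  classical
  set t : Finset C := Finset.univ.filter (fun i => g i ≠ 0) with ht
  set S' : Set α := ↑(t.image Subtype.val) with hS'
  have hS'sub : S' ⊆ C := by
    intro a ha
    simp only [hS', Finset.coe_image, Set.mem_image] at ha
    obtain ⟨i, _, rfl⟩ := ha
    exact i.2
  have hwt : wt φ S' = 0 := by
    rw [hS', wt_coe_finset, Finset.sum_image (by
      intro x _ y _ h; exact Subtype.val_injective h)]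
    rw [← hg0]
    rw [Finset.sum_filter]
    apply Finset.sum_congr rfl
    intro i _
    by_cases h : g i = 0
    · simp [h]
    · simp [h, zmod2_eq_one_of_ne_zero _ h]
  have hne : S'.Nonempty := by
    refine ⟨i₀, ?_⟩
    simp only [hS', Finset.coe_image, Set.mem_image]
    exact ⟨i₀, by simp [ht, hi₀], rfl⟩
  have heq : S' = C := by
    by_contra hne'
    exact hC.2 S' (Set.ssubset_iff_subset_ne.2 ⟨hS'sub, hne'⟩)
      (dep_of_wt_zero hrep (hS'sub.trans hC.1.subset_ground)
        (hCfin.subset hS'sub) hne hwt)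
  rw [← heq]; exact hwt

lemma cycle_wt
    (hrep : ∀ I ⊆ M.E, (M.Indep I ↔ LinearIndependent (ZMod 2) (fun e : I => φ e.1)))
    (hfin : M.E.Finite) (h : IsCycleSet M S) : wt φ S = 0 := by
  have hSfin : S.Finite := hfin.subset (cycle_subset_ground h)
  revert h
  refine finite_strong_induction (fun S => IsCycleSet M S → wt φ S = 0) hSfin ?_
  intro S hSf ih h
  rcases Set.eq_empty_or_nonempty S with rfl | hne
  · exact wt_empty
  obtain ⟨𝒞, h1, h2, rfl⟩ := h
  obtain ⟨x, C, hC𝒞, hx⟩ := hne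
  have hCcirc := h1 C hC𝒞
  have hCsub : C ⊆ ⋃₀ 𝒞 := Set.subset_sUnion_of_mem hC𝒞
  have hCne : C.Nonempty := circuit_nonempty hCcirc
  have hrest : ⋃₀ 𝒞 \ C = ⋃₀ (𝒞 \ {C}) := by
    ext a
    simp only [Set.mem_diff, Set.mem_sUnion, Set.mem_singleton_iff]
    constructor
    · rintro ⟨⟨D, hD, haD⟩, haC⟩
      refine ⟨D, ⟨hD, ?_⟩, haD⟩
      rintro rfl; exact haC haD
    · rintro ⟨D, ⟨hD, hDC⟩, haD⟩
      refine ⟨⟨D, hD, haD⟩, fun haC => ?_⟩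
      exact Set.disjoint_left.1 (h2 hD hC𝒞 hDC) haD haC
  have hcyc' : IsCycleSet M (⋃₀ 𝒞 \ C) := by
    rw [hrest]
    exact ⟨𝒞 \ {C}, fun D hD => h1 D hD.1, h2.subset Set.diff_subset, rfl⟩
  have hlt : (⋃₀ 𝒞 \ C).ncard < (⋃₀ 𝒞).ncard :=
    Set.ncard_lt_ncard (diff_ssubset_helper hCsub hCne) hSf
  have h0' := ih _ (hSf.subset Set.diff_subset) hlt hcyc'
  have := wt_diff (φ := φ) hCsub hSf
  rw [this, h0', circuit_wt hrep hfin hCcirc, add_zero]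

lemma isCycleSet_of_wt_zero
    (hrep : ∀ I ⊆ M.E, (M.Indep I ↔ LinearIndependent (ZMod 2) (fun e : I => φ e.1)))
    (hfin : M.E.Finite) (hsub : S ⊆ M.E) (h0 : wt φ S = 0) : IsCycleSet M S := by
  have hSfin : S.Finite := hfin.subset hsub
  revert hsub h0
  refine finite_strong_induction
    (fun S => S ⊆ M.E → wt φ S = 0 → IsCycleSet M S) hSfin ?_
  intro S hSf ih hsub h0
  rcases Set.eq_empty_or_nonempty S with rfl | hne
  · exact empty_isCycleSet M
  have hdep : M.Dep S := dep_of_wt_zero hrep hsub hSf hne h0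
  obtain ⟨C, hCS, hC⟩ := exists_circuit_of_dep hSf hdep
  have hCne := circuit_nonempty hC
  have hwtC := circuit_wt hrep hfin hC
  have hdiff : wt φ (S \ C) = 0 := by
    have := wt_diff (φ := φ) hCS hSf
    rw [h0, hwtC, zero_add] at this
    exact this.symm
  have hlt : (S \ C).ncard < S.ncard :=
    Set.ncard_lt_ncard (diff_ssubset_helper hCS hCne) hSf
  obtain ⟨𝒞, hc1, hc2, hc3⟩ :=
    ih (S \ C) (hSf.subset Set.diff_subset) hlt (Set.diff_subset.trans hsub) hdiff
  refine ⟨insert C 𝒞, ?_, ?_, ?_⟩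
  · intro D hD
    rcases Set.mem_insert_iff.1 hD with rfl | hD'; exacts [hC, hc1 D hD']
  · intro X hX Y hY hXY
    rcases Set.mem_insert_iff.1 hX with rfl | hX' <;>
      rcases Set.mem_insert_iff.1 hY with rfl | hY'
    · exact absurd rfl hXY
    · exact Set.disjoint_left.mpr fun a haX haY =>
        ((hc3 ▸ (Set.subset_sUnion_of_mem hY' : Y ⊆ ⋃₀ 𝒞)) haY).2 haX
    · exact Set.disjoint_left.mpr fun a haX haY =>
        ((hc3 ▸ (Set.subset_sUnion_of_mem hX' : X ⊆ ⋃₀ 𝒞)) haX).2 haY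
    · exact hc2 hX' hY' hXY
  · rw [Set.sUnion_insert, ← hc3, Set.union_diff_cancel hCS]

end Rep

section Rank

variable {M : Matroid α} {X Y I C : Set α}

lemma rkSet_bddAbove (hfin : M.E.Finite) (X : Set α) :
    BddAbove {n | ∃ I, M.Indep I ∧ I ⊆ X ∧ I.ncard = n} := by
  refine ⟨M.E.ncard, ?_⟩
  rintro m ⟨I, hI, _, rfl⟩
  exact Set.ncard_le_ncard hI.subset_ground hfin

lemma le_rkSet (hfin : M.E.Finite) (hI : M.Indep I) (hIX : I ⊆ X) :
    I.ncard ≤ rkSet M X :=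
  le_csSup (rkSet_bddAbove hfin X) ⟨I, hI, hIX, rfl⟩

lemma exists_rkSet (hfin : M.E.Finite) (X : Set α) :
    ∃ I, M.Indep I ∧ I ⊆ X ∧ I.ncard = rkSet M X := by
  have hne : {n | ∃ I, M.Indep I ∧ I ⊆ X ∧ I.ncard = n}.Nonempty :=
    ⟨0, ∅, M.empty_indep, Set.empty_subset _, Set.ncard_empty _⟩
  exact Nat.sSup_mem hne (rkSet_bddAbove hfin X)

lemma rkSet_le_rk (hfin : M.E.Finite) (X : Set α) : rkSet M X ≤ rk M := by
  obtain ⟨I, hI, _, hcard⟩ := exists_rkSet hfin X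
  rw [← hcard]
  exact le_rkSet hfin hI hI.subset_ground

lemma dep_insert_of_max (hfin : M.E.Finite) (hI : M.Indep I) (hIX : I ⊆ X)
    (hXE : X ⊆ M.E) (hmax : I.ncard = rkSet M X) {e : α} (he : e ∈ X) (heI : e ∉ I) :
    M.Dep (insert e I) := by
  refine ⟨fun hind => ?_, Set.insert_subset (hXE he) (hIX.trans hXE)⟩
  have hle := le_rkSet hfin hind (Set.insert_subset he hIX)
  rw [Set.ncard_insert_of_notMem heI (hfin.subset (hIX.trans hXE))] at hle
  omega

lemma circuit_ncard_le (hfin : M.E.Finite) (hC : Circuit M C) (hCX : C ⊆ X) :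
    C.ncard ≤ rkSet M X + 1 := by
  obtain ⟨e, he⟩ := circuit_nonempty hC
  have hind := circuit_diff_indep hC he
  have hle := le_rkSet hfin hind (Set.diff_subset.trans hCX)
  have hCfin : C.Finite := hfin.subset hC.1.subset_ground
  have heq : (C \ {e}).ncard + 1 = C.ncard := Set.ncard_diff_singleton_add_one he hCfin
  omega

lemma circuit_ncard_ge_three (hsimple : Simple M) (hC : Circuit M C) : 3 ≤ C.ncard := by
  by_contra h
  exact hC.1.not_indep (hsimple C hC.1.subset_ground (by omega))

end Rank

section Shorten

variable {n : ℕ} {M : Matroid α} {φ : α → Fin n → ZMod 2} {A : Set α} {c : α → κ}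

lemma exists_short_rainbow
    (hrep : ∀ I ⊆ M.E, (M.Indep I ↔ LinearIndependent (ZMod 2) (fun e : I => φ e.1)))
    (hfin : M.E.Finite) (hsimple : Simple M) (hA : A ⊆ M.E)
    (hbig : rkSet M A + 2 ≤ A.ncard)
    (hex : ∃ C, Circuit M C ∧ C ⊆ A ∧ Set.InjOn c C) :
    ∃ C, Circuit M C ∧ C ⊆ A ∧ Set.InjOn c C ∧ C.ncard ≤ rkSet M A := by
  classical
  set ρ := rkSet M A with hρ
  set K : Set ℕ := {k | ∃ C, (Circuit M C ∧ C ⊆ A ∧ Set.InjOn c C) ∧ C.ncard = k} with hK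
  have hKne : K.Nonempty := by
    obtain ⟨C, h1, h2, h3⟩ := hex
    exact ⟨C.ncard, C, ⟨h1, h2, h3⟩, rfl⟩
  obtain ⟨C, ⟨hC, hCA, hCinj⟩, hCcard⟩ := Nat.sInf_mem hKne
  refine ⟨C, hC, hCA, hCinj, ?_⟩
  by_contra hlong
  push_neg at hlong
  have hcle : C.ncard ≤ ρ + 1 := circuit_ncard_le hfin hC hCA
  have hCcard' : C.ncard = ρ + 1 := by omega
  have hsInf : sInf K = ρ + 1 := by omega
  have hCfin : C.Finite := hfin.subset (hCA.trans hA)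
  have hAfin : A.Finite := hfin.subset hA
  have hC3 : 3 ≤ C.ncard := circuit_ncard_ge_three hsimple hC
  have hex_f : (A \ C).Nonempty := by
    rw [Set.nonempty_iff_ne_empty]
    intro h
    have hsub : A ⊆ C := by
      intro a ha
      by_contra hac
      exact absurd ((Set.mem_diff a).2 ⟨ha, hac⟩) (h ▸ Set.notMem_empty a)
    have := Set.ncard_le_ncard hsub hCfin
    omega
  obtain ⟨f, hfA, hfC⟩ := hex_f
  have hmate : ∀ u ∈ C, ∀ v ∈ C, c u = c f → c v = c f → u = v := by
    intro u hu v hv h1 h2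
    exact hCinj hu hv (h1.trans h2.symm)
  obtain ⟨e, heC, hex_mate⟩ : ∃ e ∈ C, ∀ x ∈ C, c x = c f → e ≠ x := by
    by_cases hxx : ∃ x ∈ C, c x = c f
    · obtain ⟨x, hxC, hcx⟩ := hxx
      have hne : (C \ {x}).Nonempty := by
        rw [Set.nonempty_iff_ne_empty]
        intro h
        have hsub : C ⊆ {x} := by
          intro a ha
          by_contra hax
          exact absurd ((Set.mem_diff a).2 ⟨ha, hax⟩) (h ▸ Set.notMem_empty a)
        have := Set.ncard_le_ncard hsub (Set.finite_singleton x)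
        rw [Set.ncard_singleton] at this
        omega
      obtain ⟨e, he⟩ := hne
      exact ⟨e, he.1, fun y hy hcy heq => he.2 (heq ▸ hmate y hy x hxC hcy hcx ▸ rfl)⟩
    · push_neg at hxx
      obtain ⟨e, he⟩ := circuit_nonempty hC
      exact ⟨e, he, fun y hy hcy _ => hxx y hy hcy⟩
  have hIindep : M.Indep (C \ {e}) := circuit_diff_indep hC heC
  have hIcard : (C \ {e}).ncard = ρ := by
    have := Set.ncard_diff_singleton_add_one heC hCfin
    omega
  have hdep : M.Dep (insert f (C \ {e})) :=
    dep_insert_of_max hfin hIindep (Set.diff_subset.trans hCA) hA hIcard hfA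
      (fun hf => hfC (Set.diff_subset hf))
  obtain ⟨D, hDsub, hD⟩ := exists_circuit_of_dep (hfin.subset hdep.subset_ground) hdep
  have hfD : f ∈ D := by
    by_contra hfD
    have hsub : D ⊆ C \ {e} := fun a ha =>
      (hDsub ha).resolve_left (fun h => hfD (h ▸ ha))
    exact hD.1.not_indep (hIindep.subset hsub)
  have heD : e ∉ D := by
    intro he
    rcases hDsub he with h | h
    · exact hfC (h ▸ heC)
    · exact h.2 rfl
  have hDfin : D.Finite := hfin.subset hD.1.subset_ground
  have hDC : D \ {f} ⊆ C ∩ D := by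
    intro a ha
    rcases hDsub ha.1 with h | h
    · exact absurd h ha.2
    · exact ⟨h.1, ha.1⟩
  have hD3 : 3 ≤ D.ncard := circuit_ncard_ge_three hsimple hD
  have hDdiff : (D \ {f}).ncard + 1 = D.ncard := Set.ncard_diff_singleton_add_one hfD hDfin
  have hDcap2 : 2 ≤ (C ∩ D).ncard := by
    have h2 : (D \ {f}).ncard ≤ (C ∩ D).ncard :=
      Set.ncard_le_ncard hDC (hCfin.inter_of_left D)
    omega
  have hCD_sub : C ∆ D ⊆ M.E := by
    intro a ha
    rcases Set.mem_symmDiff.1 ha with h | h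
    · exact hA (hCA h.1)
    · exact hD.1.subset_ground h.1
  have hwtCD : wt φ (C ∆ D) = 0 := by
    rw [wt_symmDiff hCfin hDfin, circuit_wt hrep hfin hC, circuit_wt hrep hfin hD, add_zero]
  have hcyc : IsCycleSet M (C ∆ D) := isCycleSet_of_wt_zero hrep hfin hCD_sub hwtCD
  have heCD : e ∈ C ∆ D := Set.mem_symmDiff.2 (Or.inl ⟨heC, heD⟩)
  have hCDsub' : C ∆ D ⊆ insert f (C \ D) := by
    intro a ha
    rcases Set.mem_symmDiff.1 ha with h | h
    · exact Or.inr h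
    · left
      rcases hDsub h.1 with h' | h'
      · exact h'
      · exact absurd h'.1 h.2
  have hCDcard : (C ∆ D).ncard < C.ncard := by
    have h1 : (C ∆ D).ncard ≤ (C \ D).ncard + 1 := by
      have ha := Set.ncard_le_ncard hCDsub' ((hCfin.diff (t := D)).insert f)
      have h2 := Set.ncard_insert_le f (C \ D)
      omega
    have h3 : (C \ D).ncard = C.ncard - (C ∩ D).ncard := by
      rw [← Set.ncard_diff (Set.inter_subset_left) (hCfin.inter_of_left D),
        Set.diff_self_inter]
    have h4 : (C ∩ D).ncard ≤ C.ncard := Set.ncard_le_ncard Set.inter_subset_left hCfin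
    omega
  obtain ⟨D', hD'sub, hD'⟩ := cycle_exists_circuit hcyc ⟨e, heCD⟩
  have hD'fin : D'.Finite := hfin.subset hD'.1.subset_ground
  have hCDA : C ∆ D ⊆ A := by
    intro a ha
    rcases hCDsub' ha with rfl | h
    · exact hfA
    · exact hCA h.1
  -- generic contradiction builder
  have hcontra : ∀ D₀ : Set α, Circuit M D₀ → D₀ ⊆ A → Set.InjOn c D₀ →
      D₀.ncard < C.ncard → False := by
    intro D₀ h1 h2 h3 h4
    have : sInf K ≤ D₀.ncard := Nat.sInf_le ⟨D₀, ⟨h1, h2, h3⟩, rfl⟩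
    omega
  by_cases hxx : ∃ x ∈ C, c x = c f
  · obtain ⟨x, hxC, hcx⟩ := hxx
    have hinj_aux : Set.InjOn c (insert f (C \ {x})) := by
      intro u hu v hv huv
      rcases hu with rfl | hu <;> rcases hv with rfl | hv
      · rfl
      · exact (hv.2 (hmate v hv.1 x hxC huv.symm hcx)).elim
      · exact (hu.2 (hmate u hu.1 x hxC huv hcx)).elim
      · exact hCinj hu.1 hv.1 huv
    by_cases hxD : x ∈ D
    · have hsub2 : C ∆ D ⊆ insert f (C \ {x}) := by
        intro a ha
        rcases hCDsub' ha with rfl | h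
        · exact Or.inl rfl
        · exact Or.inr ⟨h.1, fun hax => h.2 (hax ▸ hxD)⟩
      exact hcontra D' hD' (hD'sub.trans hCDA) (hinj_aux.mono (hD'sub.trans hsub2))
        (lt_of_le_of_lt (Set.ncard_le_ncard hD'sub ((hCfin.union hDfin).subset Set.symmDiff_subset_union)) hCDcard)
    · have hxe : e ≠ x := hex_mate x hxC hcx
      have hDsub2 : D ⊆ insert f (C \ {x}) := by
        intro a ha
        rcases hDsub ha with rfl | h
        · exact Or.inl rfl
        · exact Or.inr ⟨h.1, fun hax => hxD (hax ▸ ha)⟩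
      have hDsub3 : D \ {f} ⊆ C \ {e, x} := by
        intro a ha
        rcases hDsub ha.1 with h | h
        · exact absurd h ha.2
        · exact ⟨h.1, by
            rintro (rfl | rfl)
            · exact h.2 rfl
            · exact hxD ha.1⟩
      have hpair : ({e, x} : Set α) ⊆ C := by
        rintro a (rfl | rfl); exacts [heC, hxC]
      have hpcard : ({e, x} : Set α).ncard = 2 := Set.ncard_pair hxe
      have hcd : (C \ {e, x}).ncard = C.ncard - 2 := by
        rw [Set.ncard_diff hpair ((Set.finite_singleton x).insert e), hpcard]
      have hDlt : D.ncard < C.ncard := by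
        have := Set.ncard_le_ncard hDsub3 hCfin.diff
        omega
      exact hcontra D hD (hDsub.trans (by
        intro a ha
        rcases ha with rfl | h
        · exact hfA
        · exact hCA (Set.diff_subset h)) : D ⊆ A)
        (hinj_aux.mono hDsub2) hDlt
  · push_neg at hxx
    have hinj_aux : Set.InjOn c (insert f C) := by
      intro u hu v hv huv
      rcases hu with rfl | hu <;> rcases hv with rfl | hv
      · rfl
      · exact (hxx v hv huv.symm).elim
      · exact (hxx u hu huv).elim
      · exact hCinj hu hv huv
    have hsub2 : C ∆ D ⊆ insert f C := by
      intro a ha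
      rcases hCDsub' ha with rfl | h
      · exact Or.inl rfl
      · exact Or.inr h.1
    exact hcontra D' hD' (hD'sub.trans hCDA) (hinj_aux.mono (hD'sub.trans hsub2))
      (lt_of_le_of_lt (Set.ncard_le_ncard hD'sub ((hCfin.union hDfin).subset Set.symmDiff_subset_union)) hCDcard)

end Shorten

section RankIneq

variable {n : ℕ} {M M₁ M₂ : Matroid α} {T : Set α} {φ : α → Fin n → ZMod 2}

lemma rank_ineq
    (hrep : ∀ I ⊆ M.E, (M.Indep I ↔ LinearIndependent (ZMod 2) (fun e : I => φ e.1)))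
    (hfin : M.E.Finite) (hsum : ThreeSum M M₁ M₂ T) :
    rkSet M (M₁.E \ T) + rkSet M (M₂.E \ T) ≤ rk M + 2 := by
  classical
  haveI : Fact (Nat.Prime 2) := ⟨Nat.prime_two⟩
  obtain ⟨hT, hT3, hTc1, hTc2, hE, hcyc⟩ := hsum
  set A := M₁.E \ T with hA
  set B := M₂.E \ T with hB
  have hTfin : T.Finite := by
    by_contra h
    rw [Set.Infinite.ncard (fun hf => h hf)] at hT3
    omega
  have hTne : T.Nonempty := by
    rw [← Set.ncard_pos hTfin]; omega
  have hAE : A ⊆ M.E := by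
    intro a ha; rw [hE]; exact ⟨Or.inl ha.1, ha.2⟩
  have hBE : B ⊆ M.E := by
    intro a ha; rw [hE]; exact ⟨Or.inr ha.1, ha.2⟩
  have hTE : ∀ t ∈ T, t ∉ M.E := by
    intro t ht hte; rw [hE] at hte; exact hte.2 ht
  have hAB : ∀ a, a ∈ A → a ∈ B → False := by
    intro a h1 h2
    exact h1.2 (hT ▸ ⟨h1.1, h2.1⟩)
  -- the symmetric difference of matched cycles
  have hsym : ∀ Y₁ Y₂ : Set α, IsCycleSet M₁ Y₁ → IsCycleSet M₂ Y₂ →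
      Y₁ ∩ T = Y₂ ∩ T → Y₁ ∆ Y₂ = (Y₁ \ T) ∪ (Y₂ \ T) := by
    intro Y₁ Y₂ hY₁ hY₂ hσ
    have hY₁E := cycle_subset_ground hY₁
    have hY₂E := cycle_subset_ground hY₂
    ext a
    rw [Set.mem_symmDiff]
    constructor
    · rintro (⟨h1, h2⟩ | ⟨h1, h2⟩)
      · refine Or.inl ⟨h1, fun ht => h2 ?_⟩
        have : a ∈ Y₂ ∩ T := hσ ▸ ⟨h1, ht⟩
        exact this.1
      · refine Or.inr ⟨h1, fun ht => h2 ?_⟩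
        have : a ∈ Y₁ ∩ T := hσ.symm ▸ ⟨h1, ht⟩
        exact this.1
    · rintro (⟨h1, h2⟩ | ⟨h1, h2⟩)
      · exact Or.inl ⟨h1, fun h3 => h2 (hT ▸ (⟨hY₁E h1, hY₂E h3⟩ : a ∈ M₁.E ∩ M₂.E))⟩
      · exact Or.inr ⟨h1, fun h3 => h2 (hT ▸ (⟨hY₁E h3, hY₂E h1⟩ : a ∈ M₁.E ∩ M₂.E))⟩
  have hdisjointAB : ∀ Y₁ Y₂ : Set α, Y₁ ⊆ M₁.E → Y₂ ⊆ M₂.E →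
      Disjoint (Y₁ \ T) (Y₂ \ T) := by
    intro Y₁ Y₂ h1 h2
    exact Set.disjoint_left.mpr fun a ha hb => ha.2 (hT ▸ (⟨h1 ha.1, h2 hb.1⟩ : a ∈ M₁.E ∩ M₂.E))
  -- matched cycles give a zero-weight set
  have hwt_matched : ∀ Y₁ Y₂ : Set α, IsCycleSet M₁ Y₁ → IsCycleSet M₂ Y₂ →
      Y₁ ∩ T = Y₂ ∩ T → wt φ (Y₁ \ T) + wt φ (Y₂ \ T) = 0 := by
    intro Y₁ Y₂ hY₁ hY₂ hσ
    have hY₁E := cycle_subset_ground hY₁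
    have hY₂E := cycle_subset_ground hY₂
    have hsub : Y₁ ∆ Y₂ ⊆ M.E := by
      rw [hsym Y₁ Y₂ hY₁ hY₂ hσ]
      refine Set.union_subset (fun a ha => hAE ⟨hY₁E ha.1, ha.2⟩)
        (fun a ha => hBE ⟨hY₂E ha.1, ha.2⟩)
    have hZ : IsCycleSet M (Y₁ ∆ Y₂) := (hcyc _ hsub).2 ⟨Y₁, Y₂, hY₁, hY₂, rfl⟩
    have h0 := cycle_wt hrep hfin hZ
    rw [hsym Y₁ Y₂ hY₁ hY₂ hσ,
      wt_union (hdisjointAB Y₁ Y₂ hY₁E hY₂E)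
        ((hfin.subset hsub).subset (by rw [hsym Y₁ Y₂ hY₁ hY₂ hσ]; exact Set.subset_union_left))
        ((hfin.subset hsub).subset (by rw [hsym Y₁ Y₂ hY₁ hY₂ hσ]; exact Set.subset_union_right))] at h0
    exact h0
  -- well-definedness of the signature value
  have hwell : ∀ σ v w : _, ∀ X₁ X₂ Y₁ Y₂ : Set α,
      IsCycleSet M₁ X₁ → IsCycleSet M₂ X₂ → X₁ ∩ T = σ → X₂ ∩ T = σ →
      wt φ (X₁ \ T) = v →
      IsCycleSet M₁ Y₁ → IsCycleSet M₂ Y₂ → Y₁ ∩ T = σ → Y₂ ∩ T = σ →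
      wt φ (Y₁ \ T) = w → v = w := by
    intro σ v w X₁ X₂ Y₁ Y₂ hX₁ hX₂ hs1 hs2 hv hY₁ hY₂ ht1 ht2 hw
    have h1 := hwt_matched X₁ Y₂ hX₁ hY₂ (by rw [hs1, ht2])
    have h2 := hwt_matched Y₁ Y₂ hY₁ hY₂ (by rw [ht1, ht2])
    rw [hv] at h1
    rw [hw] at h2
    have := h1.trans h2.symm
    exact add_right_cancel this
  -- trivial signatures give value zero
  have hzero_sig : ∀ X₁ X₂ : Set α, IsCycleSet M₁ X₁ → IsCycleSet M₂ X₂ →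
      X₁ ∩ T = X₂ ∩ T → (X₁ ∩ T = ∅ ∨ X₁ ∩ T = T) → wt φ (X₁ \ T) = 0 := by
    intro X₁ X₂ hX₁ hX₂ hσ hor
    have hX₁E := cycle_subset_ground hX₁
    rcases hor with h | h
    · have hX₁T : X₁ \ T = X₁ := by
        ext a; refine ⟨fun h' => h'.1, fun h' => ⟨h', fun ht => ?_⟩⟩
        exact absurd (h ▸ (⟨h', ht⟩ : a ∈ X₁ ∩ T)) (Set.notMem_empty a)
      have := hwt_matched X₁ ∅ hX₁ (empty_isCycleSet M₂) (by rw [h]; simp)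
      rw [Set.empty_diff, wt_empty, add_zero] at this
      exact this
    · have := hwt_matched X₁ T hX₁ (circuit_isCycleSet hTc2) (by rw [h, Set.inter_self])
      rw [Set.diff_self, wt_empty, add_zero] at this
      exact this
  -- now the main counting argument
  obtain ⟨I₁, hI₁, hI₁A, hI₁card⟩ := exists_rkSet hfin A
  obtain ⟨I₂, hI₂, hI₂B, hI₂card⟩ := exists_rkSet hfin B
  set U₁ : Submodule (ZMod 2) (Fin n → ZMod 2) := Submodule.span (ZMod 2) (φ '' I₁) with hU₁
  set U₂ : Submodule (ZMod 2) (Fin n → ZMod 2) := Submodule.span (ZMod 2) (φ '' I₂) with hU₂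
  have hI₁fin : I₁.Finite := hfin.subset hI₁.subset_ground
  have hI₂fin : I₂.Finite := hfin.subset hI₂.subset_ground
  -- every element of U₁ ⊓ U₂ has a signature
  have hkey : ∀ v ∈ U₁ ⊓ U₂, ∃ X₁ X₂ : Set α, IsCycleSet M₁ X₁ ∧ IsCycleSet M₂ X₂ ∧
      X₁ ∩ T = X₂ ∩ T ∧ wt φ (X₁ \ T) = v := by
    rintro v ⟨hv₁, hv₂⟩
    obtain ⟨S₁, hS₁I, hS₁fin, hS₁wt⟩ := exists_subset_of_mem_span hv₁
    obtain ⟨S₂, hS₂I, hS₂fin, hS₂wt⟩ := exists_subset_of_mem_span hv₂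
    have hS₁A : S₁ ⊆ A := hS₁I.trans hI₁A
    have hS₂B : S₂ ⊆ B := hS₂I.trans hI₂B
    have hdisj : Disjoint S₁ S₂ :=
      Set.disjoint_left.mpr fun a ha hb => hAB a (hS₁A ha) (hS₂B hb)
    have hXE : S₁ ∪ S₂ ⊆ M.E := Set.union_subset (hS₁A.trans hAE) (hS₂B.trans hBE)
    have hwtX : wt φ (S₁ ∪ S₂) = 0 := by
      rw [wt_union hdisj hS₁fin hS₂fin, hS₁wt, hS₂wt, vadd_self]
    have hXcyc : IsCycleSet M (S₁ ∪ S₂) := isCycleSet_of_wt_zero hrep hfin hXE hwtX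
    obtain ⟨X₁, X₂, hX₁, hX₂, hXeq⟩ := (hcyc _ hXE).1 hXcyc
    have hX₁E := cycle_subset_ground hX₁
    have hX₂E := cycle_subset_ground hX₂
    have hσ : X₁ ∩ T = X₂ ∩ T := by
      ext t
      constructor
      · rintro ⟨h1, h2⟩
        refine ⟨?_, h2⟩
        by_contra h3
        have : t ∈ S₁ ∪ S₂ := hXeq ▸ Set.mem_symmDiff.2 (Or.inl ⟨h1, h3⟩)
        exact hTE t h2 (hXE this)
      · rintro ⟨h1, h2⟩
        refine ⟨?_, h2⟩
        by_contra h3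
        have : t ∈ S₁ ∪ S₂ := hXeq ▸ Set.mem_symmDiff.2 (Or.inr ⟨h1, h3⟩)
        exact hTE t h2 (hXE this)
    refine ⟨X₁, X₂, hX₁, hX₂, hσ, ?_⟩
    have hX₁T : X₁ \ T = S₁ := by
      ext a
      constructor
      · rintro ⟨h1, h2⟩
        have haA : a ∈ A := ⟨hX₁E h1, h2⟩
        have haX : a ∈ S₁ ∪ S₂ := by
          rw [hXeq]
          refine Set.mem_symmDiff.2 (Or.inl ⟨h1, fun h3 => ?_⟩)
          exact h2 (hT ▸ ⟨hX₁E h1, hX₂E h3⟩)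
        rcases haX with h | h
        · exact h
        · exact absurd (hS₂B h) (fun hb => hAB a haA hb)
      · intro ha
        have haA : a ∈ A := hS₁A ha
        have haX : a ∈ X₁ ∆ X₂ := hXeq ▸ Or.inl ha
        rcases Set.mem_symmDiff.1 haX with h | h
        · exact ⟨h.1, haA.2⟩
        · exact (haA.2 (hT ▸ (⟨haA.1, hX₂E h.1⟩ : a ∈ M₁.E ∩ M₂.E))).elim
    rw [hX₁T, hS₁wt]
  -- helper : x + y = 0 → x = y
  have hclean : ∀ x y : Fin n → ZMod 2, x + y = 0 → x = y := by
    intro x y h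
    rw [← add_zero x, ← vadd_self y, ← add_assoc, h, zero_add]
  -- the signature function
  set Q : (Fin n → ZMod 2) → Set α → Prop := fun v σ =>
    ∃ X₁ X₂ : Set α, IsCycleSet M₁ X₁ ∧ IsCycleSet M₂ X₂ ∧
      X₁ ∩ T = σ ∧ X₂ ∩ T = σ ∧ wt φ (X₁ \ T) = v with hQdef
  have hQex : ∀ v ∈ U₁ ⊓ U₂, ∃ σ, Q v σ := by
    intro v hv
    obtain ⟨X₁, X₂, h1, h2, h3, h4⟩ := hkey v hv
    exact ⟨X₁ ∩ T, X₁, X₂, h1, h2, rfl, h3.symm, h4⟩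
  set sig : (Fin n → ZMod 2) → Set α := fun v =>
    if h : ∃ σ, Q v σ then h.choose else ∅ with hsigdef
  have hsig_spec : ∀ v ∈ U₁ ⊓ U₂, Q v (sig v) := by
    intro v hv
    have h := hQex v hv
    simp only [hsigdef, dif_pos h]
    exact h.choose_spec
  have hsig_subT : ∀ v ∈ U₁ ⊓ U₂, sig v ⊆ T := by
    intro v hv
    obtain ⟨X₁, X₂, h1, h2, h3, h4, h5⟩ := hsig_spec v hv
    rw [← h3]; exact Set.inter_subset_right
  have hsig_inj : ∀ v ∈ U₁ ⊓ U₂, ∀ w ∈ U₁ ⊓ U₂, sig v = sig w → v = w := by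
    intro v hv w hw heq
    obtain ⟨X₁, X₂, h1, h2, h3, h4, h5⟩ := hsig_spec v hv
    obtain ⟨Y₁, Y₂, g1, g2, g3, g4, g5⟩ := hsig_spec w hw
    exact hwell (sig v) v w X₁ X₂ Y₁ Y₂ h1 h2 h3 h4 h5 g1 g2 (heq ▸ g3) (heq ▸ g4) g5
  have hsig_proper : ∀ v ∈ U₁ ⊓ U₂, v ≠ 0 → sig v ≠ ∅ ∧ sig v ≠ T := by
    intro v hv hv0
    obtain ⟨X₁, X₂, h1, h2, h3, h4, h5⟩ := hsig_spec v hv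
    constructor
    · intro h
      exact hv0 (h5 ▸ hzero_sig X₁ X₂ h1 h2 (h3.trans h4.symm) (Or.inl (h ▸ h3)))
    · intro h
      exact hv0 (h5 ▸ hzero_sig X₁ X₂ h1 h2 (h3.trans h4.symm) (Or.inr (h ▸ h3)))
  -- counting subsets of T
  set Tf : Finset α := hTfin.toFinset with hTf
  have hTfcard : Tf.card = 3 := by
    rw [hTf, ← Set.ncard_eq_toFinset_card T hTfin]; exact hT3
  set G : Set α → Finset α := fun S => Tf.filter (· ∈ S) with hG
  have hGcoe : ∀ S ⊆ T, (↑(G S) : Set α) = S := by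
    intro S hS
    ext a
    simp only [hG, Finset.coe_filter, Set.mem_setOf_eq, Finset.mem_coe]
    constructor
    · rintro ⟨_, h⟩; exact h
    · intro h; exact ⟨by rw [hTf, Set.Finite.mem_toFinset]; exact hS h, h⟩
  set P : Finset (Finset α) := (Tf.powerset.erase ∅).erase Tf with hP
  have hPcard : P.card = 6 := by
    have h1 : Tf ∈ Tf.powerset.erase ∅ := by
      refine Finset.mem_erase.2 ⟨?_, Finset.mem_powerset_self Tf⟩
      intro h
      rw [h] at hTfcard
      simp at hTfcard
    have h2 : (∅ : Finset α) ∈ Tf.powerset := Finset.empty_mem_powerset Tf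
    rw [hP, Finset.card_erase_of_mem h1, Finset.card_erase_of_mem h2,
      Finset.card_powerset, hTfcard]
    norm_num
  set L' : Set (Fin n → ZMod 2) := ↑(U₁ ⊓ U₂) with hL'
  have hmemL' : ∀ v, v ∈ L' ↔ v ∈ U₁ ⊓ U₂ := fun v => Iff.rfl
  have hL'small : (L' \ {0}).ncard ≤ 6 := by
    have hmaps : ∀ v ∈ L' \ {0}, (fun v => G (sig v)) v ∈ (↑P : Set (Finset α)) := by
      intro v hv
      show G (sig v) ∈ (↑P : Set (Finset α))
      have hv' : v ∈ U₁ ⊓ U₂ := hv.1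
      have hv0 : v ≠ 0 := by simpa using hv.2
      obtain ⟨hne, hnT⟩ := hsig_proper v hv' hv0
      have hsubT := hsig_subT v hv'
      refine Finset.mem_coe.2 (Finset.mem_erase.2 ⟨?_, Finset.mem_erase.2 ⟨?_, ?_⟩⟩)
      · intro h
        apply hnT
        have hcoe := hGcoe (sig v) hsubT
        rw [h] at hcoe
        rw [← hcoe, hTf, Set.Finite.coe_toFinset]
      · intro h
        apply hne
        have hcoe := hGcoe (sig v) hsubT
        rw [h] at hcoe
        simpa using hcoe.symm
      · exact Finset.mem_powerset.2 (Finset.filter_subset _ _)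
    have hinj2 : Set.InjOn (fun v => G (sig v)) (L' \ {0}) := by
      intro v hv w hw heq
      have h1 : (↑(G (sig v)) : Set α) = sig v := hGcoe _ (hsig_subT v hv.1)
      have h2 : (↑(G (sig w)) : Set α) = sig w := hGcoe _ (hsig_subT w hw.1)
      apply hsig_inj v hv.1 w hw.1
      have heq' : G (sig v) = G (sig w) := heq
      rw [← h1, ← h2, heq']
    have hfin_le := Set.ncard_le_ncard_of_injOn (fun v => G (sig v)) hmaps hinj2
      (Finset.finite_toSet P)
    rw [Set.ncard_coe_finset] at hfin_le
    omega
  have hL'card : L'.ncard ≤ 7 := by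
    have h0 : (0 : Fin n → ZMod 2) ∈ L' := (U₁ ⊓ U₂).zero_mem
    have heq : L' = insert 0 (L' \ {0}) := by
      rw [Set.insert_diff_singleton, Set.insert_eq_of_mem h0]
    rw [heq]
    have := Set.ncard_insert_le (0 : Fin n → ZMod 2) (L' \ {0})
    omega
  -- finrank of the intersection is at most 2
  haveI : Finite (Fin n → ZMod 2) := by infer_instance
  haveI : Fintype ↥(U₁ ⊓ U₂) := Fintype.ofFinite _
  have hfr2 : Module.finrank (ZMod 2) ↥(U₁ ⊓ U₂) ≤ 2 := by
    have hcards : Fintype.card ↥(U₁ ⊓ U₂) =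
        Fintype.card (ZMod 2) ^ Module.finrank (ZMod 2) ↥(U₁ ⊓ U₂) :=
      Module.card_eq_pow_finrank
    have hc2 : Fintype.card (ZMod 2) = 2 := by decide
    have hle : Fintype.card ↥(U₁ ⊓ U₂) ≤ 7 := by
      rw [← Nat.card_eq_fintype_card]
      have : Nat.card ↥(U₁ ⊓ U₂) = L'.ncard := Nat.card_coe_set_eq L'
      omega
    rw [hc2] at hcards
    by_contra hgt
    push_neg at hgt
    have : 2 ^ 3 ≤ 2 ^ Module.finrank (ZMod 2) ↥(U₁ ⊓ U₂) :=
      Nat.pow_le_pow_right (by norm_num) hgt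
    omega
  -- finrank of the spans
  haveI := hI₁fin.fintype
  haveI := hI₂fin.fintype
  have hli₁ : LinearIndependent (ZMod 2) (fun e : I₁ => φ e.1) :=
    (hrep I₁ hI₁.subset_ground).1 hI₁
  have hli₂ : LinearIndependent (ZMod 2) (fun e : I₂ => φ e.1) :=
    (hrep I₂ hI₂.subset_ground).1 hI₂
  have hrange₁ : φ '' I₁ = Set.range (fun e : I₁ => φ e.1) := Set.image_eq_range φ I₁
  have hrange₂ : φ '' I₂ = Set.range (fun e : I₂ => φ e.1) := Set.image_eq_range φ I₂
  have hfr₁ : Module.finrank (ZMod 2) ↥U₁ = I₁.ncard := by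
    rw [hU₁, hrange₁, finrank_span_eq_card hli₁, ← Nat.card_eq_fintype_card,
      Nat.card_coe_set_eq]
  have hfr₂ : Module.finrank (ZMod 2) ↥U₂ = I₂.ncard := by
    rw [hU₂, hrange₂, finrank_span_eq_card hli₂, ← Nat.card_eq_fintype_card,
      Nat.card_coe_set_eq]
  -- the sup is spanned by a maximal independent subset of I₁ ∪ I₂
  obtain ⟨J, hJ, hJsub, hJcard⟩ := exists_rkSet hfin (I₁ ∪ I₂)
  have hJfin : J.Finite := hfin.subset hJ.subset_ground
  haveI := hJfin.fintype
  have hliJ : LinearIndependent (ZMod 2) (fun e : J => φ e.1) :=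
    (hrep J hJ.subset_ground).1 hJ
  have hIJE : I₁ ∪ I₂ ⊆ M.E := Set.union_subset hI₁.subset_ground hI₂.subset_ground
  have hsple : U₁ ⊔ U₂ ≤ Submodule.span (ZMod 2) (φ '' J) := by
    rw [hU₁, hU₂, ← Submodule.span_union, ← Set.image_union]
    rw [Submodule.span_le]
    rintro x ⟨g, hg, rfl⟩
    by_cases hgJ : g ∈ J
    · exact Submodule.subset_span ⟨g, hgJ, rfl⟩
    · have hdep : M.Dep (insert g J) :=
        dep_insert_of_max hfin hJ hJsub hIJE hJcard hg hgJ
      obtain ⟨D, hDsub, hD⟩ := exists_circuit_of_dep (hfin.subset hdep.subset_ground) hdep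
      have hgD : g ∈ D := by
        by_contra hgD
        exact hD.1.not_indep (hJ.subset (fun a ha =>
          (hDsub ha).resolve_left (fun h => hgD (h ▸ ha))))
      have hDfin : D.Finite := hfin.subset hD.1.subset_ground
      have hDJ : D \ {g} ⊆ J := by
        intro a ha
        rcases hDsub ha.1 with h | h
        · exact absurd h ha.2
        · exact h
      have hwtD := circuit_wt hrep hfin hD
      have hsplit : wt φ D = φ g + wt φ (D \ {g}) := by
        have := wt_diff (φ := φ) (Set.singleton_subset_iff.2 hgD) hDfin
        rw [wt_singleton] at this
        exact this
      have : φ g = wt φ (D \ {g}) := hclean _ _ (by rw [← hsplit, hwtD])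
      rw [this]
      exact wt_mem_span hDJ hDfin.diff
  have hfrsup : Module.finrank (ZMod 2) ↥(U₁ ⊔ U₂) ≤ J.ncard := by
    have h1 : Module.finrank (ZMod 2) ↥(U₁ ⊔ U₂) ≤
        Module.finrank (ZMod 2) ↥(Submodule.span (ZMod 2) (φ '' J)) :=
      Submodule.finrank_mono hsple
    have h2 : Module.finrank (ZMod 2) ↥(Submodule.span (ZMod 2) (φ '' J)) = J.ncard := by
      rw [Set.image_eq_range φ J, finrank_span_eq_card hliJ, ← Nat.card_eq_fintype_card,
        Nat.card_coe_set_eq]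
    omega
  have hJrk : J.ncard ≤ rk M := le_rkSet hfin hJ hJ.subset_ground
  have hsum_eq := Submodule.finrank_sup_add_finrank_inf_eq U₁ U₂
  omega

end RankIneq

lemma circuit_of_restrict {M' : Matroid α} {R C : Set α} (hR : R ⊆ M'.E)
    (h : Circuit (M' ↾ R) C) : Circuit M' C ∧ C ⊆ R := by
  have hCR : C ⊆ R := by
    have := h.1.subset_ground
    rwa [Matroid.restrict_ground_eq] at this
  refine ⟨⟨⟨fun hi => h.1.not_indep (Matroid.restrict_indep_iff.mpr ⟨hi, hCR⟩),
    hCR.trans hR⟩, ?_⟩, hCR⟩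
  intro D hD hdep
  refine h.2 D hD ⟨fun hi => hdep.not_indep (Matroid.restrict_indep_iff.1 hi).1, ?_⟩
  rw [Matroid.restrict_ground_eq]
  exact hD.subset.trans hCR


end Aux

/-- a simple coloured binary matroid which is a 3-sum such that both
parts are large and contain rainbow circuits has a short rainbow circuit pair. -/
theorem srcp_of_threeSum (M M₁ M₂ : Matroid α) (T : Set α)
    (hM : IsBinary M) (hfin : M.E.Finite) (hsimple : Simple M)
    (hsum : ThreeSum M M₁ M₂ T) (c : α → κ)
    (hsize₁ : rk M₁ + 1 < (M₁.E \ T).ncard)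
    (hsize₂ : rk M₂ + 1 < (M₂.E \ T).ncard)
    (h₁ : ∃ C, Circuit (M₁ ↾ (M₁.E \ M₂.E)) C ∧ Set.InjOn c C)
    (h₂ : ∃ C, Circuit (M₂ ↾ (M₂.E \ M₁.E)) C ∧ Set.InjOn c C) :
    ∃ C₁ C₂, SRCP M c C₁ C₂ := by

  classical
  obtain ⟨n, φ, hrep⟩ := hM
  obtain ⟨hT, hT3, hTc1, hTc2, hE, hcyc⟩ := hsum
  set A := M₁.E \ T with hA
  set B := M₂.E \ T with hB
  have hTfin : T.Finite := by
    by_contra h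
    rw [Set.Infinite.ncard (fun hf => h hf)] at hT3
    omega
  have hAE : A ⊆ M.E := fun a ha => hE ▸ ⟨Or.inl ha.1, ha.2⟩
  have hBE : B ⊆ M.E := fun a ha => hE ▸ ⟨Or.inr ha.1, ha.2⟩
  have hA_eq : M₁.E \ M₂.E = A := by
    ext e
    constructor
    · rintro ⟨h1, h2⟩
      exact ⟨h1, fun ht => h2 ((hT ▸ ht : e ∈ M₁.E ∩ M₂.E).2)⟩
    · rintro ⟨h1, h2⟩
      exact ⟨h1, fun h3 => h2 (hT ▸ (⟨h1, h3⟩ : e ∈ M₁.E ∩ M₂.E))⟩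
  have hB_eq : M₂.E \ M₁.E = B := by
    ext e
    constructor
    · rintro ⟨h1, h2⟩
      exact ⟨h1, fun ht => h2 ((hT ▸ ht : e ∈ M₁.E ∩ M₂.E).1)⟩
    · rintro ⟨h1, h2⟩
      exact ⟨h1, fun h3 => h2 (hT ▸ (⟨h3, h1⟩ : e ∈ M₁.E ∩ M₂.E))⟩
  have hM₁E : M₁.E = A ∪ T := by
    ext e
    constructor
    · intro he
      by_cases ht : e ∈ T
      · exact Or.inr ht
      · exact Or.inl ⟨he, ht⟩
    · rintro (he | he)
      · exact he.1
      · exact circuit_subset_ground hTc1 he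
  have hM₂E : M₂.E = B ∪ T := by
    ext e
    constructor
    · intro he
      by_cases ht : e ∈ T
      · exact Or.inr ht
      · exact Or.inl ⟨he, ht⟩
    · rintro (he | he)
      · exact he.1
      · exact circuit_subset_ground hTc2 he
  have hM₁fin : M₁.E.Finite := by
    rw [hM₁E]; exact (hfin.subset hAE).union hTfin
  have hM₂fin : M₂.E.Finite := by
    rw [hM₂E]; exact (hfin.subset hBE).union hTfin
  -- circuits of M₁ avoiding T are cycles of M, hence contain circuits of M
  have htransfer₁ : ∀ C : Set α, Circuit M₁ C → C ⊆ A →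
      ∃ C', C' ⊆ C ∧ Circuit M C' := by
    intro C hC hCA
    have hCcyc : IsCycleSet M C := by
      refine (hcyc C (hCA.trans hAE)).2 ⟨C, ∅, circuit_isCycleSet hC, empty_isCycleSet M₂, ?_⟩
      exact (symmDiff_bot C).symm
    exact cycle_exists_circuit hCcyc (circuit_nonempty hC)
  have htransfer₂ : ∀ C : Set α, Circuit M₂ C → C ⊆ B →
      ∃ C', C' ⊆ C ∧ Circuit M C' := by
    intro C hC hCB
    have hCcyc : IsCycleSet M C := by
      refine (hcyc C (hCB.trans hBE)).2 ⟨∅, C, empty_isCycleSet M₁, circuit_isCycleSet hC, ?_⟩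
      exact (bot_symmDiff C).symm
    exact cycle_exists_circuit hCcyc (circuit_nonempty hC)
  -- rainbow circuits of M inside A and B
  have hex₁ : ∃ C, Circuit M C ∧ C ⊆ A ∧ Set.InjOn c C := by
    obtain ⟨C, hC, hCinj⟩ := h₁
    obtain ⟨hC', hCR⟩ := circuit_of_restrict Set.diff_subset hC
    rw [hA_eq] at hCR
    obtain ⟨C', hC'sub, hC'circ⟩ := htransfer₁ C hC' hCR
    exact ⟨C', hC'circ, hC'sub.trans hCR, hCinj.mono hC'sub⟩
  have hex₂ : ∃ C, Circuit M C ∧ C ⊆ B ∧ Set.InjOn c C := by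
    obtain ⟨C, hC, hCinj⟩ := h₂
    obtain ⟨hC', hCR⟩ := circuit_of_restrict Set.diff_subset hC
    rw [hB_eq] at hCR
    obtain ⟨C', hC'sub, hC'circ⟩ := htransfer₂ C hC' hCR
    exact ⟨C', hC'circ, hC'sub.trans hCR, hCinj.mono hC'sub⟩
  -- rkSet M A ≤ rk M₁ and similarly for B
  have hindep_transfer₁ : ∀ I : Set α, M.Indep I → I ⊆ A → M₁.Indep I := by
    intro I hI hIA
    by_contra hni
    have hdep : M₁.Dep I := ⟨hni, hIA.trans Set.diff_subset⟩
    obtain ⟨C, hCI, hC⟩ := exists_circuit_of_dep (hfin.subset (hIA.trans hAE)) hdep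
    obtain ⟨C', hC'sub, hC'circ⟩ := htransfer₁ C hC (hCI.trans hIA)
    exact hC'circ.1.not_indep (hI.subset (hC'sub.trans hCI))
  have hindep_transfer₂ : ∀ I : Set α, M.Indep I → I ⊆ B → M₂.Indep I := by
    intro I hI hIB
    by_contra hni
    have hdep : M₂.Dep I := ⟨hni, hIB.trans Set.diff_subset⟩
    obtain ⟨C, hCI, hC⟩ := exists_circuit_of_dep (hfin.subset (hIB.trans hBE)) hdep
    obtain ⟨C', hC'sub, hC'circ⟩ := htransfer₂ C hC (hCI.trans hIB)
    exact hC'circ.1.not_indep (hI.subset (hC'sub.trans hCI))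
  have hrk₁ : rkSet M A ≤ rk M₁ := by
    obtain ⟨I, hI, hIA, hIcard⟩ := exists_rkSet hfin A
    rw [← hIcard]
    exact le_rkSet hM₁fin (hindep_transfer₁ I hI hIA) (hindep_transfer₁ I hI hIA).subset_ground
  have hrk₂ : rkSet M B ≤ rk M₂ := by
    obtain ⟨I, hI, hIB, hIcard⟩ := exists_rkSet hfin B
    rw [← hIcard]
    exact le_rkSet hM₂fin (hindep_transfer₂ I hI hIB) (hindep_transfer₂ I hI hIB).subset_ground
  -- short rainbow circuits in both sides
  obtain ⟨C₁, hC₁, hC₁A, hC₁inj, hC₁card⟩ :=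
    exists_short_rainbow hrep hfin hsimple hAE (by omega) hex₁
  obtain ⟨C₂, hC₂, hC₂B, hC₂inj, hC₂card⟩ :=
    exists_short_rainbow hrep hfin hsimple hBE (by omega) hex₂
  -- the rank inequality
  have hineq : rkSet M A + rkSet M B ≤ rk M + 2 :=
    rank_ineq hrep hfin ⟨hT, hT3, hTc1, hTc2, hE, hcyc⟩
  -- disjointness
  have hdisj : Disjoint C₁ C₂ := Set.disjoint_left.mpr fun a ha hb =>
    (hC₁A ha).2 (hT ▸ (⟨(hC₁A ha).1, (hC₂B hb).1⟩ : a ∈ M₁.E ∩ M₂.E))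
  exact ⟨C₁, C₂, ⟨hC₁, hC₁inj⟩, ⟨hC₂, hC₂inj⟩, hdisj, by omega⟩


end RainbowPaper
end

section
/- Let G be the coloured graph of the inductive construction (G_1 a single edge of colour 1; each G_i obtained from G_{i−1} by adding a new vertex joined by two edges of colour i to two distinct old vertices; G = G_{n−1}). Let u_1, u_2, u_1', u_2' be vertices of G that are pairwise distinct except possibly u_1 = u_2. If u = u_1 = u_2, then there exist two edge-disjoint rainbow paths P_1, P_2 with P_i joining u to u_i' and |P_1| + |P_2| ≤ n − 1. If u_1 ≠ u_2, then there exist two edge-disjoint rainbow paths originating at distinct vertices of {u_1, u_2} and terminating at distinct vertices of {u_1', u_2'} with total length at most n − 2. -/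
open scoped Classical

namespace RainbowPaper

/-- The inductively constructed coloured graph on `n + 2` vertices: vertex `0` and
`1` are `v₁₁` and `v₁₂`, joined by the edge of colour `1`; every vertex `i ≥ 2` is
joined to the two distinct earlier vertices `f i` and `g i` by two edges of colour
`i`.  (Since each edge joins a vertex to a strictly smaller one, the colour of an
edge is the larger of its two endpoints.) -/
def constructionGraph (n : ℕ) (f g : Fin (n + 2) → Fin (n + 2)) :
    SimpleGraph (Fin (n + 2)) where
  Adj a b := a ≠ b ∧ (s(a, b) = s(0, 1) ∨
    ∃ i : Fin (n + 2), 2 ≤ i.val ∧ (s(a, b) = s(i, f i) ∨ s(a, b) = s(i, g i)))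
  symm := by
    constructor
    rintro a b ⟨h1, h2⟩
    refine ⟨h1.symm, ?_⟩
    rw [Sym2.eq_swap]
    exact h2
  loopless := ⟨fun a h => h.1 rfl⟩

/-- The hypotheses of the construction: each new vertex `i ≥ 2` is joined to two
distinct earlier vertices. -/
def ConstructionHyp (n : ℕ) (f g : Fin (n + 2) → Fin (n + 2)) : Prop :=
  ∀ i : Fin (n + 2), 2 ≤ i.val → f i < i ∧ g i < i ∧ f i ≠ g i

/-- The colour of an edge of the construction graph: the larger of its two
endpoints (with the initial edge `{0, 1}` getting colour `1`). -/
def edgeColour {n : ℕ} : Sym2 (Fin (n + 2)) → ℕ :=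
  Sym2.lift ⟨fun a b => max a.val b.val, fun a b => by simp [max_comm]⟩

/-- A rainbow path: a path whose edges receive pairwise distinct colours. -/
def IsRainbowPath {V : Type*} (G : SimpleGraph V) (col : Sym2 V → ℕ) {u v : V}
    (p : G.Walk u v) : Prop :=
  p.IsPath ∧ (p.edges.map col).Nodup

/-- Two walks are edge-disjoint if no edge lies on both. -/
def EdgeDisjoint {V : Type*} {G : SimpleGraph V} {u v u' v' : V}
    (p : G.Walk u v) (q : G.Walk u' v') : Prop :=
  ∀ e, e ∈ p.edges → e ∉ q.edges

section Aux

variable {n : ℕ} {f g : Fin (n + 2) → Fin (n + 2)}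

local notation "G" => constructionGraph n f g

lemma edgeColour_mk (a b : Fin (n + 2)) : edgeColour s(a, b) = max a.val b.val := rfl

lemma colour_le {u v : Fin (n + 2)} {p : (G).Walk u v} {m : ℕ}
    (h : ∀ x ∈ p.support, x.val ≤ m) {e} (he : e ∈ p.edges) : edgeColour e ≤ m := by
  induction e using Sym2.ind with
  | _ a b =>
    have ha := h a (SimpleGraph.Walk.fst_mem_support_of_mem_edges p he)
    have hb := h b (SimpleGraph.Walk.snd_mem_support_of_mem_edges p he)
    rw [edgeColour_mk]; omega

lemma top_edge_not_mem {T c u v : Fin (n + 2)} {p : (G).Walk u v} {m : ℕ}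
    (h : ∀ x ∈ p.support, x.val ≤ m) (hT : m < T.val) : s(T, c) ∉ p.edges := fun he =>
  absurd (h T (SimpleGraph.Walk.fst_mem_support_of_mem_edges p he)) (by omega)

lemma rainbow_single {u v : Fin (n + 2)} (h : (G).Adj u v) :
    IsRainbowPath G edgeColour (SimpleGraph.Walk.cons h SimpleGraph.Walk.nil) := by
  constructor
  · simp [SimpleGraph.Walk.cons_isPath_iff, h.ne]
  · simp

lemma rainbow_cons {T c w : Fin (n + 2)} (h : (G).Adj T c) {p : (G).Walk c w} {m : ℕ}
    (hp : IsRainbowPath G edgeColour p) (hsupp : ∀ x ∈ p.support, x.val ≤ m)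
    (hT : m < T.val) (hc : c.val ≤ m) :
    IsRainbowPath G edgeColour (SimpleGraph.Walk.cons h p) := by
  constructor
  · rw [SimpleGraph.Walk.cons_isPath_iff]
    exact ⟨hp.1, fun hmem => absurd (hsupp T hmem) (by omega)⟩
  · rw [SimpleGraph.Walk.edges_cons, List.map_cons, List.nodup_cons]
    refine ⟨fun hmem => ?_, hp.2⟩
    obtain ⟨e, he, hcol⟩ := List.mem_map.mp hmem
    have := colour_le hsupp he
    rw [edgeColour_mk] at hcol
    omega

lemma rainbow_reverse {u v : Fin (n + 2)} {p : (G).Walk u v}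
    (hp : IsRainbowPath G edgeColour p) : IsRainbowPath G edgeColour p.reverse := by
  refine ⟨hp.1.reverse, ?_⟩
  rw [SimpleGraph.Walk.edges_reverse, List.map_reverse]
  exact List.nodup_reverse.mpr hp.2

lemma ED_symm {u v u' v' : Fin (n + 2)} {p : (G).Walk u v} {q : (G).Walk u' v'}
    (h : EdgeDisjoint p q) : EdgeDisjoint q p := fun e he he' => h e he' he

lemma ED_reverse {u v u' v' : Fin (n + 2)} {p : (G).Walk u v} {q : (G).Walk u' v'}
    (h : EdgeDisjoint p q) : EdgeDisjoint p.reverse q.reverse := by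
  intro e he he'
  rw [SimpleGraph.Walk.edges_reverse, List.mem_reverse] at he he'
  exact h e he he'

lemma adj_top {T : Fin (n + 2)} (hfg : ConstructionHyp n f g) (hT : 2 ≤ T.val) :
    (G).Adj T (f T) ∧ (G).Adj T (g T) := by
  obtain ⟨h1, h2, _⟩ := hfg T hT
  exact ⟨⟨h1.ne', Or.inr ⟨T, hT, Or.inl rfl⟩⟩, ⟨h2.ne', Or.inr ⟨T, hT, Or.inr rfl⟩⟩⟩

lemma adj_base {u v : Fin (n + 2)} (hu : u.val ≤ 1) (hv : v.val ≤ 1) (huv : u ≠ v) :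
    (G).Adj u v := by
  refine ⟨huv, Or.inl ?_⟩
  have huv' : u.val ≠ v.val := fun h => huv (Fin.ext h)
  have e0 : ((0 : Fin (n+2)) : ℕ) = 0 := rfl
  have e1 : ((1 : Fin (n+2)) : ℕ) = 1 := rfl
  rcases Nat.lt_or_ge u.val 1 with h | h
  · have h0 : u = 0 := Fin.ext (by omega)
    have h1 : v = 1 := Fin.ext (by omega)
    rw [h0, h1]
  · have h0 : u = 1 := Fin.ext (by omega)
    have h1 : v = 0 := Fin.ext (by omega)
    rw [h0, h1, Sym2.eq_swap]

end Aux

section Single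

variable {n : ℕ} {f g : Fin (n + 2) → Fin (n + 2)}

local notation "G" => constructionGraph n f g

lemma exists_rainbow_path (hfg : ConstructionHyp n f g) :
    ∀ m : ℕ, 1 ≤ m → m ≤ n + 1 → ∀ u u' : Fin (n + 2), u.val ≤ m → u'.val ≤ m → u ≠ u' →
    ∃ p : (G).Walk u u', IsRainbowPath G edgeColour p ∧
      (∀ x ∈ p.support, x.val ≤ m) ∧ p.length ≤ max (m - 1) 1 := by
  intro m
  induction m using Nat.strong_induction_on with
  | _ m IH =>
    intro hm1 hmn u u' hu hu' huu'
    rcases Nat.lt_or_ge m 2 with hm2 | hm2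
    · -- m = 1 : base case, single edge
      refine ⟨SimpleGraph.Walk.cons (adj_base (by omega) (by omega) huu') SimpleGraph.Walk.nil,
        rainbow_single _, ?_, by simpa using le_max_right (m-1) 1⟩
      intro x hx
      simp [SimpleGraph.Walk.support_cons] at hx
      rcases hx with rfl | rfl <;> omega
    · -- m ≥ 2
      obtain ⟨T, hTval⟩ : ∃ T : Fin (n + 2), T.val = m := ⟨⟨m, by omega⟩, rfl⟩
      have hT2 : 2 ≤ T.val := by omega
      obtain ⟨hfT, hgT, hfgT⟩ := hfg T hT2
      obtain ⟨hadjf, hadjg⟩ := adj_top hfg hT2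
      have key : ∀ w : Fin (n + 2), w.val < m → ∃ p : (G).Walk T w,
          IsRainbowPath G edgeColour p ∧ (∀ x ∈ p.support, x.val ≤ m) ∧
          p.length ≤ max (m - 1) 1 := by
        intro w hw
        by_cases hfw : f T = w
        · subst hfw
          refine ⟨SimpleGraph.Walk.cons hadjf SimpleGraph.Walk.nil, rainbow_single _, ?_, by simp⟩
          intro x hx
          simp [SimpleGraph.Walk.support_cons] at hx
          rcases hx with rfl | rfl <;> omega
        by_cases hgw : g T = w
        · subst hgw
          refine ⟨SimpleGraph.Walk.cons hadjg SimpleGraph.Walk.nil, rainbow_single _, ?_, by simp⟩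
          intro x hx
          simp [SimpleGraph.Walk.support_cons] at hx
          rcases hx with rfl | rfl <;> omega
        · -- use f T, recurse at m - 1
          have hm3 : 3 ≤ m := by
            have h1 : (f T).val < m := by omega
            have h2 : (g T).val < m := by omega
            have h3 : (f T).val ≠ (g T).val := fun h => hfgT (Fin.ext h)
            have h4 : (f T).val ≠ w.val := fun h => hfw (Fin.ext h)
            have h5 : (g T).val ≠ w.val := fun h => hgw (Fin.ext h)
            omega
          obtain ⟨p, hp, hps, hpl⟩ := IH (m - 1) (by omega) (by omega) (by omega)
            (f T) w (by omega) (by omega) hfw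
          refine ⟨SimpleGraph.Walk.cons hadjf p,
            rainbow_cons hadjf hp hps (by omega) (by omega), ?_, ?_⟩
          · intro x hx
            rw [SimpleGraph.Walk.support_cons] at hx
            rcases List.mem_cons.mp hx with rfl | hx
            · omega
            · exact le_trans (hps x hx) (by omega)
          · simp only [SimpleGraph.Walk.length_cons]
            omega
      rcases Nat.lt_or_ge u.val m with hu2 | hu2
      · rcases Nat.lt_or_ge u'.val m with hu2' | hu2'
        · obtain ⟨p, hp, hps, hpl⟩ := IH (m - 1) (by omega) (by omega) (by omega)
            u u' (by omega) (by omega) huu'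
          exact ⟨p, hp, fun x hx => le_trans (hps x hx) (by omega), by omega⟩
        · have : u' = T := Fin.ext (by omega)
          subst this
          obtain ⟨p, hp, hps, hpl⟩ := key u hu2
          exact ⟨p.reverse, rainbow_reverse hp,
            by simpa [SimpleGraph.Walk.support_reverse] using hps, by simpa using hpl⟩
      · have : u = T := Fin.ext (by omega)
        subst this
        exact key u' (by omega)

end Single

section Aux2

open SimpleGraph

variable {n : ℕ} {f g : Fin (n + 2) → Fin (n + 2)}

local notation "G" => constructionGraph n f g

lemma sym2_ne {T c d : Fin (n + 2)} (h : c ≠ d) : s(T, c) ≠ s(T, d) :=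
  fun h' => h (Sym2.congr_right.mp h')

lemma top_edge_not_mem' {T c u v : Fin (n + 2)} {p : (G).Walk u v} {m : ℕ}
    (h : ∀ x ∈ p.support, x.val ≤ m) (hT : m < T.val) : s(c, T) ∉ p.edges := by
  rw [Sym2.eq_swap]; exact top_edge_not_mem h hT

lemma ED_cons_left {T c w u' v' : Fin (n + 2)} (h : (G).Adj T c) {p : (G).Walk c w}
    {q : (G).Walk u' v'} (hed : EdgeDisjoint p q) (hq : s(T, c) ∉ q.edges) :
    EdgeDisjoint (Walk.cons h p) q := by
  intro e he he'
  rw [Walk.edges_cons, List.mem_cons] at he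
  rcases he with rfl | he
  · exact hq he'
  · exact hed e he he'

lemma ED_cons_cons {T T' c d w w' : Fin (n + 2)} (h : (G).Adj T c) (h' : (G).Adj T' d)
    {p : (G).Walk c w} {q : (G).Walk d w'} (hed : EdgeDisjoint p q)
    (h1 : s(T, c) ≠ s(T', d)) (h2 : s(T, c) ∉ q.edges) (h3 : s(T', d) ∉ p.edges) :
    EdgeDisjoint (Walk.cons h p) (Walk.cons h' q) := by
  intro e he he'
  rw [Walk.edges_cons, List.mem_cons] at he he'
  rcases he with rfl | he <;> rcases he' with he' | he'
  · exact h1 he'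
  · exact h2 he'
  · exact (he' ▸ h3) he
  · exact hed e he he'

lemma ED_single {T c u' v' : Fin (n + 2)} (h : (G).Adj T c)
    {q : (G).Walk u' v'} (hq : s(T, c) ∉ q.edges) :
    EdgeDisjoint (Walk.cons h Walk.nil) q := by
  intro e he he'
  simp only [Walk.edges_cons, Walk.edges_nil, List.mem_singleton] at he
  subst he
  exact hq he'

lemma supp_single {T c : Fin (n + 2)} (h : (G).Adj T c) {m : ℕ} (hT : T.val ≤ m)
    (hc : c.val ≤ m) : ∀ x ∈ (Walk.cons h Walk.nil).support, x.val ≤ m := by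
  intro x hx
  simp only [Walk.support_cons, Walk.support_nil, List.mem_cons, List.mem_singleton] at hx
  rcases hx with rfl | rfl | h
  · exact hT
  · exact hc
  · exact absurd h (by simp)

lemma supp_cons {T c w : Fin (n + 2)} (h : (G).Adj T c) {p : (G).Walk c w} {m : ℕ}
    (hT : T.val ≤ m) (hp : ∀ x ∈ p.support, x.val ≤ m) :
    ∀ x ∈ (Walk.cons h p).support, x.val ≤ m := by
  intro x hx
  rw [Walk.support_cons, List.mem_cons] at hx
  rcases hx with rfl | hx
  · exact hT
  · exact hp x hx

end Aux2

section Main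

open SimpleGraph

variable {n : ℕ} {f g : Fin (n + 2) → Fin (n + 2)}

local notation "G" => constructionGraph n f g

lemma two_paths (hfg : ConstructionHyp n f g) :
    ∀ t : ℕ, t ≤ n + 1 → ∀ u₁ u₂ x y : Fin (n + 2),
    u₁.val ≤ t → u₂.val ≤ t → x.val ≤ t → y.val ≤ t →
    x ≠ y → u₁ ≠ x → u₁ ≠ y → u₂ ≠ x → u₂ ≠ y →
    ((u₁ = u₂ → ∃ (P₁ : (G).Walk u₁ x) (P₂ : (G).Walk u₁ y),
        IsRainbowPath G edgeColour P₁ ∧ IsRainbowPath G edgeColour P₂ ∧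
        EdgeDisjoint P₁ P₂ ∧ (∀ v ∈ P₁.support, v.val ≤ t) ∧
        (∀ v ∈ P₂.support, v.val ≤ t) ∧ P₁.length + P₂.length ≤ t) ∧
     (u₁ ≠ u₂ → ∃ (b : Bool) (P₁ : (G).Walk u₁ (cond b x y))
        (P₂ : (G).Walk u₂ (cond b y x)),
        IsRainbowPath G edgeColour P₁ ∧ IsRainbowPath G edgeColour P₂ ∧
        EdgeDisjoint P₁ P₂ ∧ (∀ v ∈ P₁.support, v.val ≤ t) ∧
        (∀ v ∈ P₂.support, v.val ≤ t) ∧ P₁.length + P₂.length ≤ t - 1)) := by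
  intro t
  induction t using Nat.strong_induction_on with
  | _ t IH =>
    intro htn u₁ u₂ x y hu₁ hu₂ hx hy hxy h1x h1y h2x h2y
    have hne : ∀ (a b : Fin (n + 2)), a ≠ b → a.val ≠ b.val := fun a b h h' => h (Fin.ext h')
    rcases Nat.lt_or_ge t 2 with ht2 | ht2
    · exact absurd rfl (by have := hne _ _ hxy; have := hne _ _ h1x; have := hne _ _ h1y; omega :
        ¬ (0 : ℕ) = 0)
    -- t ≥ 2
    obtain ⟨T, hTval⟩ : ∃ T : Fin (n + 2), T.val = t := ⟨⟨t, by omega⟩, rfl⟩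
    have hT2 : 2 ≤ T.val := by omega
    obtain ⟨hfT, hgT, hab⟩ := hfg T hT2
    obtain ⟨hadjf, hadjg⟩ := adj_top hfg hT2
    have hav : (f T).val < t := by omega
    have hbv : (g T).val < t := by omega
    have S := exists_rainbow_path hfg (t - 1) (by omega) (by omega)
    have IHm : ∀ u₁ u₂ x y : Fin (n + 2),
        u₁.val ≤ t - 1 → u₂.val ≤ t - 1 → x.val ≤ t - 1 → y.val ≤ t - 1 →
        x ≠ y → u₁ ≠ x → u₁ ≠ y → u₂ ≠ x → u₂ ≠ y →
        ((u₁ = u₂ → ∃ (P₁ : (G).Walk u₁ x) (P₂ : (G).Walk u₁ y),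
            IsRainbowPath G edgeColour P₁ ∧ IsRainbowPath G edgeColour P₂ ∧
            EdgeDisjoint P₁ P₂ ∧ (∀ v ∈ P₁.support, v.val ≤ t - 1) ∧
            (∀ v ∈ P₂.support, v.val ≤ t - 1) ∧ P₁.length + P₂.length ≤ t - 1) ∧
         (u₁ ≠ u₂ → ∃ (b : Bool) (P₁ : (G).Walk u₁ (cond b x y))
            (P₂ : (G).Walk u₂ (cond b y x)),
            IsRainbowPath G edgeColour P₁ ∧ IsRainbowPath G edgeColour P₂ ∧
            EdgeDisjoint P₁ P₂ ∧ (∀ v ∈ P₁.support, v.val ≤ t - 1) ∧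
            (∀ v ∈ P₂.support, v.val ≤ t - 1) ∧ P₁.length + P₂.length ≤ t - 1 - 1)) :=
      IH (t - 1) (by omega) (by omega)
    clear IH
    have hmax : max (t - 1 - 1) 1 ≤ t - 1 := max_le (by omega) (by omega)
    have hT1 : t - 1 < T.val := by omega
    have hrel : t - 1 ≤ t := Nat.sub_le t 1
    have hrel2 : t - 1 - 1 ≤ t - 1 := Nat.sub_le (t - 1) 1
    have hlt1 : ∀ k : ℕ, k < t → k ≤ t - 1 := fun k hk => by omega
    have hstep1 : ∀ a : ℕ, a ≤ max (t - 1 - 1) 1 → 1 + a ≤ t := by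
      intro a h; have h2 := le_trans h hmax; omega
    have hstep2 : ∀ a b : ℕ, a + b ≤ t - 1 - 1 → a + 1 + b ≤ t - 1 := by intro a b h; omega
    have hstep3 : ∀ a b : ℕ, a + b ≤ t - 1 → a + 1 + b ≤ t := by intro a b h; omega
    have hstep4 : ∀ a b : ℕ, a + b ≤ t - 1 - 1 → a + 1 + (b + 1) ≤ t := by intro a b h; omega
    -- helper for the unequal part with first source = T and first target a neighbour of T
    have helperU : ∀ (c u₂ z : Fin (n + 2)), (G).Adj T c → c.val < t → u₂.val < t →
        z.val < t → c ≠ z → u₂ ≠ c → u₂ ≠ z →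
        ∃ (P₁ : (G).Walk T c) (P₂ : (G).Walk u₂ z),
          IsRainbowPath G edgeColour P₁ ∧ IsRainbowPath G edgeColour P₂ ∧
          EdgeDisjoint P₁ P₂ ∧ (∀ v ∈ P₁.support, v.val ≤ t) ∧
          (∀ v ∈ P₂.support, v.val ≤ t) ∧ P₁.length + P₂.length ≤ t - 1 := by
      intro c u₂ z hadjc hcv huv hzv hcz huc huz
      have ht3 : 3 ≤ t := by
        have := hne _ _ hcz; have := hne _ _ huc; have := hne _ _ huz; omega
      obtain ⟨q, hq, hqs, hql⟩ := S u₂ z (by omega) (by omega) huz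
      refine ⟨Walk.cons hadjc Walk.nil, q, rainbow_single hadjc, hq,
        ED_single hadjc (top_edge_not_mem hqs (by omega)), supp_single hadjc (by omega) (by omega),
        fun v hv => le_trans (hqs v hv) (by omega), ?_⟩
      simp only [Walk.length_cons, Walk.length_nil]
      omega
    -- helper for the equal part with source T and first target a neighbour of T
    have helperE : ∀ (c d z : Fin (n + 2)), (G).Adj T c → (G).Adj T d → c.val < t →
        d.val < t → z.val < t → c ≠ d → c ≠ z → d ≠ z →
        ∃ (P₁ : (G).Walk T c) (P₂ : (G).Walk T z),
          IsRainbowPath G edgeColour P₁ ∧ IsRainbowPath G edgeColour P₂ ∧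
          EdgeDisjoint P₁ P₂ ∧ (∀ v ∈ P₁.support, v.val ≤ t) ∧
          (∀ v ∈ P₂.support, v.val ≤ t) ∧ P₁.length + P₂.length ≤ t := by
      intro c d z hadjc hadjd hcv hdv hzv hcd hcz hdz
      have ht3 : 3 ≤ t := by
        have := hne _ _ hcd; have := hne _ _ hcz; have := hne _ _ hdz; omega
      obtain ⟨q, hq, hqs, hql⟩ := S d z (by omega) (by omega) hdz
      refine ⟨Walk.cons hadjc Walk.nil, Walk.cons hadjd q, rainbow_single hadjc,
        rainbow_cons hadjd hq hqs (by omega) (by omega),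
        ED_single hadjc ?_, supp_single hadjc (by omega) (by omega),
        supp_cons hadjd (by omega) (fun v hv => le_trans (hqs v hv) (by omega)), ?_⟩
      · rw [Walk.edges_cons, List.mem_cons]
        push_neg
        exact ⟨sym2_ne hcd, top_edge_not_mem hqs (by omega)⟩
      · simp only [Walk.length_cons, Walk.length_nil]
        omega
    -- unequal part with first source = T, targets below t
    have uneqSrcTop : ∀ u₂ x y : Fin (n + 2), u₂.val < t → x.val < t → y.val < t →
        x ≠ y → u₂ ≠ x → u₂ ≠ y → u₂ ≠ T →
        ∃ (b : Bool) (P₁ : (G).Walk T (cond b x y)) (P₂ : (G).Walk u₂ (cond b y x)),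
          IsRainbowPath G edgeColour P₁ ∧ IsRainbowPath G edgeColour P₂ ∧
          EdgeDisjoint P₁ P₂ ∧ (∀ v ∈ P₁.support, v.val ≤ t) ∧
          (∀ v ∈ P₂.support, v.val ≤ t) ∧ P₁.length + P₂.length ≤ t - 1 := by
      intro u₂ x y huv hxv hyv hxy' h2x' h2y' h2T
      by_cases hax : f T = x
      · subst hax
        obtain ⟨P₁, P₂, h₁, h₂, hed, hs₁, hs₂, hl⟩ :=
          helperU (f T) u₂ y hadjf hav huv hyv hxy' h2x' h2y'
        exact ⟨true, P₁, P₂, h₁, h₂, hed, hs₁, hs₂, hl⟩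
      by_cases hay : f T = y
      · subst hay
        obtain ⟨P₁, P₂, h₁, h₂, hed, hs₁, hs₂, hl⟩ :=
          helperU (f T) u₂ x hadjf hav huv hxv (Ne.symm hxy') h2y' h2x'
        exact ⟨false, P₁, P₂, h₁, h₂, hed, hs₁, hs₂, hl⟩
      by_cases hbx : g T = x
      · subst hbx
        obtain ⟨P₁, P₂, h₁, h₂, hed, hs₁, hs₂, hl⟩ :=
          helperU (g T) u₂ y hadjg hbv huv hyv hxy' h2x' h2y'
        exact ⟨true, P₁, P₂, h₁, h₂, hed, hs₁, hs₂, hl⟩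
      by_cases hby : g T = y
      · subst hby
        obtain ⟨P₁, P₂, h₁, h₂, hed, hs₁, hs₂, hl⟩ :=
          helperU (g T) u₂ x hadjg hbv huv hxv (Ne.symm hxy') h2y' h2x'
        exact ⟨false, P₁, P₂, h₁, h₂, hed, hs₁, hs₂, hl⟩
      -- neither neighbour is a target: recurse
      obtain ⟨c, hadjc, hcv, hcx, hcy, hcu⟩ :
          ∃ c : Fin (n + 2), (G).Adj T c ∧ c.val < t ∧ c ≠ x ∧ c ≠ y ∧ c ≠ u₂ := by
        by_cases hau : f T = u₂
        · exact ⟨g T, hadjg, hbv, hbx, hby, fun h => hab (hau.trans h.symm)⟩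
        · exact ⟨f T, hadjf, hav, hax, hay, hau⟩
      clear hax hay hbx hby h2T
      obtain ⟨b0, q₁, q₂, hr₁, hr₂, hed, hs₁, hs₂, hl⟩ :=
        (IHm c u₂ x y (hlt1 _ hcv) (hlt1 _ huv) (hlt1 _ hxv) (hlt1 _ hyv)
          hxy' hcx hcy h2x' h2y').2 hcu
      refine ⟨b0, Walk.cons hadjc q₁, q₂,
        rainbow_cons hadjc hr₁ hs₁ hT1 (hlt1 _ hcv), hr₂,
        ED_cons_left hadjc hed (top_edge_not_mem hs₂ hT1),
        supp_cons hadjc hTval.le (fun v hv => le_trans (hs₁ v hv) hrel),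
        fun v hv => le_trans (hs₂ v hv) hrel, ?_⟩
      simp only [Walk.length_cons]
      exact hstep2 _ _ hl
    -- equal part, second target strictly below t (first target and source may be T)
    have eqAux : ∀ u x y : Fin (n + 2), u.val ≤ t → x.val ≤ t → y.val < t →
        x ≠ y → u ≠ x → u ≠ y →
        ∃ (P₁ : (G).Walk u x) (P₂ : (G).Walk u y),
          IsRainbowPath G edgeColour P₁ ∧ IsRainbowPath G edgeColour P₂ ∧
          EdgeDisjoint P₁ P₂ ∧ (∀ v ∈ P₁.support, v.val ≤ t) ∧
          (∀ v ∈ P₂.support, v.val ≤ t) ∧ P₁.length + P₂.length ≤ t := by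
      intro u x y huv hxv hyv hxy' hux huy
      rcases Nat.lt_or_ge u.val t with huval | huval
      · rcases Nat.lt_or_ge x.val t with hxval | hxval
        · -- everything below t : recurse directly
          obtain ⟨P₁, P₂, h₁, h₂, hed, hs₁, hs₂, hl⟩ :=
            (IHm u u x y (hlt1 _ huval) (hlt1 _ huval) (hlt1 _ hxval) (hlt1 _ hyv)
              hxy' hux huy hux huy).1 rfl
          exact ⟨P₁, P₂, h₁, h₂, hed, fun v hv => le_trans (hs₁ v hv) hrel,
            fun v hv => le_trans (hs₂ v hv) hrel, le_trans hl hrel⟩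
        · -- x = T
          have hxT : T = x := Fin.ext (by omega)
          subst hxT
          by_cases hfu : f T = u
          · subst hfu
            obtain ⟨q, hq, hqs, hql⟩ := S (f T) y (hlt1 _ hav) (hlt1 _ hyv) huy
            refine ⟨Walk.cons hadjf.symm Walk.nil, q, rainbow_single _, hq,
              ED_single hadjf.symm (top_edge_not_mem' hqs hT1),
              supp_single hadjf.symm (le_of_lt hav) hTval.le,
              fun v hv => le_trans (hqs v hv) hrel, ?_⟩
            show 1 + q.length ≤ t
            exact hstep1 _ hql
          by_cases hgu : g T = u
          · subst hgu
            obtain ⟨q, hq, hqs, hql⟩ := S (g T) y (hlt1 _ hbv) (hlt1 _ hyv) huy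
            refine ⟨Walk.cons hadjg.symm Walk.nil, q, rainbow_single _, hq,
              ED_single hadjg.symm (top_edge_not_mem' hqs hT1),
              supp_single hadjg.symm (le_of_lt hbv) hTval.le,
              fun v hv => le_trans (hqs v hv) hrel, ?_⟩
            show 1 + q.length ≤ t
            exact hstep1 _ hql
          · -- u is not a neighbour of T : recurse with targets (c, y)
            obtain ⟨c, hadjc, hcv, hcy, huc⟩ :
                ∃ c : Fin (n + 2), (G).Adj T c ∧ c.val < t ∧ c ≠ y ∧ u ≠ c := by
              by_cases hfy : f T = y
              · exact ⟨g T, hadjg, hbv, fun h => hab (hfy.trans h.symm), fun h => hgu h.symm⟩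
              · exact ⟨f T, hadjf, hav, hfy, fun h => hfu h.symm⟩
            clear hfu hgu hux
            obtain ⟨q₁, q₂, h₁, h₂, hed, hs₁, hs₂, hl⟩ :=
              (IHm u u c y (hlt1 _ huval) (hlt1 _ huval) (hlt1 _ hcv) (hlt1 _ hyv)
                hcy huc huy huc huy).1 rfl
            refine ⟨(Walk.cons hadjc q₁.reverse).reverse, q₂,
              rainbow_reverse (rainbow_cons hadjc (rainbow_reverse h₁)
                (fun v hv => hs₁ v (by rwa [Walk.support_reverse, List.mem_reverse] at hv))
                hT1 (hlt1 _ hcv)), h₂, ?_, ?_, fun v hv => le_trans (hs₂ v hv) hrel, ?_⟩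
            · intro e he he₂
              rw [Walk.edges_reverse, List.mem_reverse, Walk.edges_cons, List.mem_cons] at he
              rcases he with rfl | he
              · exact top_edge_not_mem hs₂ hT1 he₂
              · rw [Walk.edges_reverse, List.mem_reverse] at he
                exact hed e he he₂
            · intro v hv
              rw [Walk.support_reverse, List.mem_reverse, Walk.support_cons, List.mem_cons] at hv
              rcases hv with rfl | hv
              · exact hTval.le
              · rw [Walk.support_reverse, List.mem_reverse] at hv
                exact le_trans (hs₁ v hv) hrel
            · simp only [Walk.length_reverse, Walk.length_cons]
              exact hstep3 _ _ hl
      · -- u = T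
        have huT : T = u := Fin.ext (by omega)
        subst huT
        have hxval : x.val < t := by have := hne _ _ hux; omega
        by_cases hax : f T = x
        · subst hax
          by_cases hby : g T = y
          · subst hby
            refine ⟨Walk.cons hadjf Walk.nil, Walk.cons hadjg Walk.nil,
              rainbow_single _, rainbow_single _, ED_single hadjf ?_,
              supp_single hadjf hTval.le (le_of_lt hav),
              supp_single hadjg hTval.le (le_of_lt hbv), ?_⟩
            · simp only [Walk.edges_cons, Walk.edges_nil, List.mem_singleton]
              exact sym2_ne hab
            · show 1 + 1 ≤ t
              exact ht2
          · obtain ⟨P₁, P₂, h₁, h₂, hed, hs₁, hs₂, hl⟩ :=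
              helperE (f T) (g T) y hadjf hadjg hav hbv hyv hab hxy' hby
            exact ⟨P₁, P₂, h₁, h₂, hed, hs₁, hs₂, hl⟩
        by_cases hay : f T = y
        · subst hay
          by_cases hbx : g T = x
          · subst hbx
            refine ⟨Walk.cons hadjg Walk.nil, Walk.cons hadjf Walk.nil,
              rainbow_single _, rainbow_single _, ED_single hadjg ?_,
              supp_single hadjg hTval.le (le_of_lt hbv),
              supp_single hadjf hTval.le (le_of_lt hav), ?_⟩
            · simp only [Walk.edges_cons, Walk.edges_nil, List.mem_singleton]
              exact sym2_ne (Ne.symm hab)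
            · show 1 + 1 ≤ t
              exact ht2
          · obtain ⟨Q₁, Q₂, h₁, h₂, hed, hs₁, hs₂, hl⟩ :=
              helperE (f T) (g T) x hadjf hadjg hav hbv hxval hab (Ne.symm hxy') hbx
            exact ⟨Q₂, Q₁, h₂, h₁, ED_symm hed, hs₂, hs₁, by rw [Nat.add_comm]; exact hl⟩
        by_cases hbx : g T = x
        · subst hbx
          obtain ⟨P₁, P₂, h₁, h₂, hed, hs₁, hs₂, hl⟩ :=
            helperE (g T) (f T) y hadjg hadjf hbv hav hyv (Ne.symm hab) hxy' hay
          exact ⟨P₁, P₂, h₁, h₂, hed, hs₁, hs₂, hl⟩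
        by_cases hby : g T = y
        · subst hby
          obtain ⟨Q₁, Q₂, h₁, h₂, hed, hs₁, hs₂, hl⟩ :=
            helperE (g T) (f T) x hadjg hadjf hbv hav hxval (Ne.symm hab) (Ne.symm hxy') hax
          exact ⟨Q₂, Q₁, h₂, h₁, ED_symm hed, hs₂, hs₁, by rw [Nat.add_comm]; exact hl⟩
        · -- recurse with sources the two neighbours of T
          obtain ⟨b0, q₁, q₂, h₁, h₂, hed, hs₁, hs₂, hl⟩ :=
            (IHm (f T) (g T) x y (hlt1 _ hav) (hlt1 _ hbv) (hlt1 _ hxval) (hlt1 _ hyv)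
              hxy' hax hay hbx hby).2 hab
          clear hax hay hbx hby hux huy hxy'
          cases b0 with
          | true =>
            refine ⟨Walk.cons hadjf q₁, Walk.cons hadjg q₂,
              rainbow_cons hadjf h₁ hs₁ hT1 (hlt1 _ hav),
              rainbow_cons hadjg h₂ hs₂ hT1 (hlt1 _ hbv),
              ED_cons_cons hadjf hadjg hed (sym2_ne hab)
                (top_edge_not_mem hs₂ hT1) (top_edge_not_mem hs₁ hT1),
              supp_cons hadjf hTval.le (fun v hv => le_trans (hs₁ v hv) hrel),
              supp_cons hadjg hTval.le (fun v hv => le_trans (hs₂ v hv) hrel), ?_⟩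
            simp only [Walk.length_cons]
            exact hstep4 _ _ hl
          | false =>
            refine ⟨Walk.cons hadjg q₂, Walk.cons hadjf q₁,
              rainbow_cons hadjg h₂ hs₂ hT1 (hlt1 _ hbv),
              rainbow_cons hadjf h₁ hs₁ hT1 (hlt1 _ hav),
              ED_cons_cons hadjg hadjf (ED_symm hed) (sym2_ne (Ne.symm hab))
                (top_edge_not_mem hs₁ hT1) (top_edge_not_mem hs₂ hT1),
              supp_cons hadjg hTval.le (fun v hv => le_trans (hs₂ v hv) hrel),
              supp_cons hadjf hTval.le (fun v hv => le_trans (hs₁ v hv) hrel), ?_⟩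
            simp only [Walk.length_cons]
            exact hstep4 _ _ (by rw [Nat.add_comm]; exact hl)
    -- unequal part, targets strictly below t
    have uneqAux : ∀ u₁ u₂ x y : Fin (n + 2), u₁.val ≤ t → u₂.val ≤ t →
        x.val < t → y.val < t → x ≠ y → u₁ ≠ x → u₁ ≠ y → u₂ ≠ x → u₂ ≠ y → u₁ ≠ u₂ →
        ∃ (b : Bool) (P₁ : (G).Walk u₁ (cond b x y)) (P₂ : (G).Walk u₂ (cond b y x)),
          IsRainbowPath G edgeColour P₁ ∧ IsRainbowPath G edgeColour P₂ ∧
          EdgeDisjoint P₁ P₂ ∧ (∀ v ∈ P₁.support, v.val ≤ t) ∧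
          (∀ v ∈ P₂.support, v.val ≤ t) ∧ P₁.length + P₂.length ≤ t - 1 := by
      intro u₁ u₂ x y h1v' h2v' hxv hyv hxy' h1x' h1y' h2x' h2y' h12'
      rcases Nat.lt_or_ge u₁.val t with h1v | h1v
      · rcases Nat.lt_or_ge u₂.val t with h2v | h2v
        · obtain ⟨b0, P₁, P₂, h₁, h₂, hed, hs₁, hs₂, hl⟩ :=
            (IHm u₁ u₂ x y (hlt1 _ h1v) (hlt1 _ h2v) (hlt1 _ hxv) (hlt1 _ hyv)
              hxy' h1x' h1y' h2x' h2y').2 h12'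
          exact ⟨b0, P₁, P₂, h₁, h₂, hed, fun v hv => le_trans (hs₁ v hv) hrel,
            fun v hv => le_trans (hs₂ v hv) hrel, le_trans hl hrel2⟩
        · -- u₂ = T
          have h2T : T = u₂ := Fin.ext (by omega)
          subst h2T
          obtain ⟨b0, Q₁, Q₂, h₁, h₂, hed, hs₁, hs₂, hl⟩ :=
            uneqSrcTop u₁ x y h1v hxv hyv hxy' h1x' h1y'
              (fun h => absurd (congrArg Fin.val h) (by omega))
          cases b0 with
          | true =>
            exact ⟨false, Q₂, Q₁, h₂, h₁, ED_symm hed, hs₂, hs₁,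
              by rw [Nat.add_comm]; exact hl⟩
          | false =>
            exact ⟨true, Q₂, Q₁, h₂, h₁, ED_symm hed, hs₂, hs₁,
              by rw [Nat.add_comm]; exact hl⟩
      · -- u₁ = T
        have h1T : T = u₁ := Fin.ext (by omega)
        subst h1T
        have h2v : u₂.val < t := by have := hne _ _ h12'; omega
        exact uneqSrcTop u₂ x y h2v hxv hyv hxy' h2x' h2y'
          (fun h => absurd (congrArg Fin.val h) (by omega))
    -- assemble the two parts
    constructor
    · -- equal part
      intro h12eq
      subst h12eq
      rcases Nat.lt_or_ge y.val t with hyv | hyv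
      · exact eqAux u₁ x y hu₁ hx hyv hxy h1x h1y
      · have hxval : x.val < t := by have := hne _ _ hxy; omega
        obtain ⟨Q₁, Q₂, h₁, h₂, hed, hs₁, hs₂, hl⟩ :=
          eqAux u₁ y x hu₁ hy hxval (Ne.symm hxy) h1y h1x
        exact ⟨Q₂, Q₁, h₂, h₁, ED_symm hed, hs₂, hs₁, by rw [Nat.add_comm]; exact hl⟩
    · -- unequal part
      intro h12
      by_cases hbelow : x.val < t ∧ y.val < t
      · exact uneqAux u₁ u₂ x y hu₁ hu₂ hbelow.1 hbelow.2 hxy h1x h1y h2x h2y h12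
      · -- x or y is the top vertex, so u₁ and u₂ are below: reverse the roles
        have h1v : u₁.val < t := by
          have := hne _ _ h1x; have := hne _ _ h1y; omega
        have h2v : u₂.val < t := by
          have := hne _ _ h2x; have := hne _ _ h2y; omega
        obtain ⟨b0, Q₁, Q₂, h₁, h₂, hed, hs₁, hs₂, hl⟩ :=
          uneqAux x y u₁ u₂ hx hy h1v h2v h12 (Ne.symm h1x) (Ne.symm h2x)
            (Ne.symm h1y) (Ne.symm h2y) hxy
        cases b0 with
        | true =>
          refine ⟨true, Q₁.reverse, Q₂.reverse, rainbow_reverse h₁, rainbow_reverse h₂,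
            ED_reverse hed,
            fun v hv => hs₁ v (by rwa [Walk.support_reverse, List.mem_reverse] at hv),
            fun v hv => hs₂ v (by rwa [Walk.support_reverse, List.mem_reverse] at hv), ?_⟩
          simp only [Walk.length_reverse]
          exact hl
        | false =>
          refine ⟨false, Q₂.reverse, Q₁.reverse, rainbow_reverse h₂, rainbow_reverse h₁,
            ED_reverse (ED_symm hed),
            fun v hv => hs₂ v (by rwa [Walk.support_reverse, List.mem_reverse] at hv),
            fun v hv => hs₁ v (by rwa [Walk.support_reverse, List.mem_reverse] at hv), ?_⟩
          simp only [Walk.length_reverse]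
          rw [Nat.add_comm]
          exact hl

end Main

/-- in the construction graph on `n + 2` vertices, given vertices
`u₁, u₂, u₁', u₂'` pairwise distinct except possibly `u₁ = u₂`: if `u₁ = u₂ = u`,
there are edge-disjoint rainbow paths from `u` to `u₁'` and to `u₂'` of total
length at most `(n+2) - 1`; if `u₁ ≠ u₂`, there are edge-disjoint rainbow paths
originating at distinct vertices of `{u₁, u₂}` and terminating at distinct
vertices of `{u₁', u₂'}` of total length at most `(n+2) - 2`. -/
theorem two_disjoint_rainbow_paths (n : ℕ) (f g : Fin (n + 2) → Fin (n + 2))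
    (hfg : ConstructionHyp n f g) (u₁ u₂ u₁' u₂' : Fin (n + 2))
    (h12' : u₁' ≠ u₂') (h11' : u₁ ≠ u₁') (h12 : u₁ ≠ u₂')
    (h21' : u₂ ≠ u₁') (h22' : u₂ ≠ u₂') :
    (u₁ = u₂ →
      ∃ (P₁ : (constructionGraph n f g).Walk u₁ u₁')
        (P₂ : (constructionGraph n f g).Walk u₁ u₂'),
        IsRainbowPath _ edgeColour P₁ ∧ IsRainbowPath _ edgeColour P₂ ∧
        EdgeDisjoint P₁ P₂ ∧ P₁.length + P₂.length ≤ n + 1) ∧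
    (u₁ ≠ u₂ →
      ∃ (b : Bool) (P₁ : (constructionGraph n f g).Walk u₁ (cond b u₁' u₂'))
        (P₂ : (constructionGraph n f g).Walk u₂ (cond b u₂' u₁')),
        IsRainbowPath _ edgeColour P₁ ∧ IsRainbowPath _ edgeColour P₂ ∧
        EdgeDisjoint P₁ P₂ ∧ P₁.length + P₂.length ≤ n) := by
  have H := two_paths hfg (n + 1) le_rfl u₁ u₂ u₁' u₂'
    (Nat.lt_succ_iff.mp u₁.isLt) (Nat.lt_succ_iff.mp u₂.isLt)
    (Nat.lt_succ_iff.mp u₁'.isLt) (Nat.lt_succ_iff.mp u₂'.isLt)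
    h12' h11' h12 h21' h22'
  constructor
  · intro h
    obtain ⟨P₁, P₂, h₁, h₂, hed, _, _, hl⟩ := H.1 h
    exact ⟨P₁, P₂, h₁, h₂, hed, hl⟩
  · intro h
    obtain ⟨b, P₁, P₂, h₁, h₂, hed, _, _, hl⟩ := H.2 h
    exact ⟨b, P₁, P₂, h₁, h₂, hed, hl⟩

end RainbowPaper
end
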